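/- One has the minimax characterizations c* = inf{ sup_{t ≥ 0} I(t·u) : u ∈ 𝒟, u ≠ 0 } and m* = inf{ sup_{s,t ≥ 0} I(s·u⁺ + t·u⁻) : u ∈ 𝒟, u⁺ ≠ 0, u⁻ ≠ 0 }. -/

import Mathlib

noncomputable section

open Real Filter Set

namespace DPLap

/-- Forward difference operator. -/
def dlt (u : ℤ → ℝ) (n : ℤ) : ℝ := u (n + 1) - u n

/-- Positive part `u⁺`. -/
def pos (u : ℤ → ℝ) : ℤ → ℝ := fun n => max (u n) 0

/-- Negative part `u⁻`. -/
def neg (u : ℤ → ℝ) : ℤ → ℝ := fun n => min (u n) 0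

/-- Summand of the `E`-norm. -/
def nsum (a b : ℤ → ℝ) (p : ℕ) (u : ℤ → ℝ) (n : ℤ) : ℝ :=
  a n * |dlt u n| ^ p + b n * |u n| ^ p

/-- Membership in the space `E`. -/
def memE (a b : ℤ → ℝ) (p : ℕ) (u : ℤ → ℝ) : Prop :=
  Summable (nsum a b p u)

/-- The norm `‖u‖ = (∑ [a|Δu|^p + b|u|^p])^(1/p)`. -/
def dnorm (a b : ℤ → ℝ) (p : ℕ) (u : ℤ → ℝ) : ℝ :=
  (∑' n : ℤ, nsum a b p u n) ^ ((p : ℝ)⁻¹)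

/-- Summand `c(n)|u(n)|^q ln(|u(n)|^r)` of the logarithmic term (with the
convention `0^q ln 0 = 0`, automatic from `Real.rpow` and `Real.log`). -/
def logSummand (c : ℤ → ℝ) (q r : ℝ) (u : ℤ → ℝ) (n : ℤ) : ℝ :=
  c n * |u n| ^ q * Real.log (|u n| ^ r)

/-- Membership in `𝒟`. -/
def memD (a b c : ℤ → ℝ) (p : ℕ) (q r : ℝ) (u : ℤ → ℝ) : Prop :=
  memE a b p u ∧ Summable (logSummand c q r u)

/-- The energy functional `I`. -/
def En (a b c : ℤ → ℝ) (p : ℕ) (q r : ℝ) (u : ℤ → ℝ) : ℝ :=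
  (1 / (p : ℝ)) * dnorm a b p u ^ p
    + (r / q ^ 2) * ∑' n : ℤ, c n * |u n| ^ q
    - (1 / q) * ∑' n : ℤ, logSummand c q r u n

/-- The pairing `⟨I'(u), v⟩`. -/
def pr (a b c : ℤ → ℝ) (p : ℕ) (q r : ℝ) (u v : ℤ → ℝ) : ℝ :=
  (∑' n : ℤ, (a n * |dlt u n| ^ (p - 2) * dlt u n * dlt v n
      + b n * |u n| ^ (p - 2) * u n * v n))
    - ∑' n : ℤ, c n * |u n| ^ (q - 2) * u n * v n * Real.log (|u n| ^ r)

/-- The Nehari set `𝒩`. -/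
def Nset (a b c : ℤ → ℝ) (p : ℕ) (q r : ℝ) : Set (ℤ → ℝ) :=
  {u | memD a b c p q r u ∧ u ≠ 0 ∧ pr a b c p q r u u = 0}

/-- The sign-changing Nehari set `ℳ`. -/
def Mset (a b c : ℤ → ℝ) (p : ℕ) (q r : ℝ) : Set (ℤ → ℝ) :=
  {u | memD a b c p q r u ∧ pos u ≠ 0 ∧ neg u ≠ 0 ∧
      pr a b c p q r u (pos u) = 0 ∧ pr a b c p q r u (neg u) = 0}

/-- `m* = inf_ℳ I`. -/
def mStar (a b c : ℤ → ℝ) (p : ℕ) (q r : ℝ) : ℝ :=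
  sInf (En a b c p q r '' Mset a b c p q r)

/-- `c* = inf_𝒩 I`. -/
def cStar (a b c : ℤ → ℝ) (p : ℕ) (q r : ℝ) : ℝ :=
  sInf (En a b c p q r '' Nset a b c p q r)

open Topology

set_option linter.unusedSectionVars false

/-- The scalar fibering polynomial-type function. -/
def Phi (p : ℕ) (q r K A B : ℝ) (s : ℝ) : ℝ :=
  (1 / (p:ℝ)) * (s ^ p * K) + (r / q ^ 2) * (s ^ q * A)
    - (1 / q) * (s ^ q * (r * Real.log s * A) + s ^ q * B)

section scalars

variable {p : ℕ} {q r : ℝ} (hp2 : 2 ≤ p) (hpq : (p:ℝ) < q) (hr : 1 ≤ r)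

lemma hp0' (hp2 : 2 ≤ p) : (0:ℝ) < p := by
  have : (2:ℝ) ≤ p := by exact_mod_cast hp2
  linarith

lemma hq0' (hp2 : 2 ≤ p) (hpq : (p:ℝ) < q) : 0 < q := lt_trans (hp0' hp2) hpq

include hp2 hpq in
/-- Bracket inequality 1 : `s^p/p - s^q/q ≤ 1/p - 1/q` for `s ≥ 0`. -/
lemma bracket1 {s : ℝ} (hs : 0 ≤ s) :
    s ^ p * (1/(p:ℝ)) - s ^ q * (1/q) ≤ 1/(p:ℝ) - 1/q := by
  have hp0 : (0:ℝ) < p := hp0' hp2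
  have hq0 : 0 < q := hq0' hp2 hpq
  rcases eq_or_lt_of_le hs with h0 | h0
  · rw [← h0]
    rw [zero_pow (by omega), Real.zero_rpow hq0.ne']
    have : 1/q ≤ 1/(p:ℝ) := by
      apply one_div_le_one_div_of_le hp0 hpq.le
    simp only [zero_mul, sub_zero]
    linarith
  · -- s > 0
    set f : ℝ → ℝ := fun s => s ^ p * (1/(p:ℝ)) - s ^ q * (1/q) with hf
    have hder : ∀ x : ℝ, 0 < x → HasDerivAt f (x ^ (p-1) - x ^ (q-1)) x := by
      intro x hx
      have h1 : HasDerivAt (fun s : ℝ => s ^ p) ((p:ℝ) * x ^ (p-1)) x := hasDerivAt_pow p x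
      have h2 : HasDerivAt (fun s : ℝ => s ^ q) (q * x ^ (q-1)) x :=
        Real.hasDerivAt_rpow_const (Or.inl hx.ne')
      have := (h1.mul_const (1/(p:ℝ))).sub (h2.mul_const (1/q))
      refine this.congr_deriv ?_
      field_simp
      try ring
    have hcont : ∀ x : ℝ, 0 < x → ContinuousAt f x := fun x hx => (hder x hx).continuousAt
    have hpq1 : (p:ℝ) - 1 ≤ q - 1 := by linarith
    have hcast : ((p - 1 : ℕ) : ℝ) = (p:ℝ) - 1 := by
      have : 1 ≤ p := by omega
      push_cast [this]; ring
    rcases le_total s 1 with hs1 | hs1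
    · -- monotone on [s,1]
      have hmono : MonotoneOn f (Icc s 1) := by
        apply monotoneOn_of_deriv_nonneg (convex_Icc s 1)
        · exact fun x hx => (hcont x (lt_of_lt_of_le h0 hx.1)).continuousWithinAt
        · intro x hx
          rw [interior_Icc] at hx
          exact ((hder x (lt_trans h0 hx.1)).differentiableAt).differentiableWithinAt
        · intro x hx
          rw [interior_Icc] at hx
          rw [(hder x (lt_trans h0 hx.1)).deriv]
          have hx0 : 0 < x := lt_trans h0 hx.1
          have : x ^ (q-1) ≤ x ^ ((p:ℝ)-1) :=
            Real.rpow_le_rpow_of_exponent_ge hx0 hx.2.le hpq1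
          rw [← Real.rpow_natCast x (p-1), hcast]
          linarith
      have := hmono (left_mem_Icc.mpr hs1) (right_mem_Icc.mpr hs1) hs1
      simpa [hf, one_rpow] using this
    · -- antitone on [1,s]
      have hanti : AntitoneOn f (Icc 1 s) := by
        apply antitoneOn_of_deriv_nonpos (convex_Icc 1 s)
        · exact fun x hx => (hcont x (lt_of_lt_of_le one_pos hx.1)).continuousWithinAt
        · intro x hx
          rw [interior_Icc] at hx
          exact ((hder x (lt_trans one_pos hx.1)).differentiableAt).differentiableWithinAt
        · intro x hx
          rw [interior_Icc] at hx
          rw [(hder x (lt_trans one_pos hx.1)).deriv]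
          have hx1 : 1 ≤ x := hx.1.le
          have : x ^ ((p:ℝ)-1) ≤ x ^ (q-1) :=
            Real.rpow_le_rpow_of_exponent_le hx1 hpq1
          rw [← Real.rpow_natCast x (p-1), hcast]
          linarith
      have := hanti (left_mem_Icc.mpr hs1) (right_mem_Icc.mpr hs1) hs1
      simpa [hf, one_rpow] using this

include hp2 hpq in
/-- Bracket inequality 2 : `s^q/q² - s^q log s / q ≤ 1/q²` for `s ≥ 0`. -/
lemma bracket2 {s : ℝ} (hs : 0 ≤ s) :
    s ^ q * (1/q^2) - s ^ q * Real.log s * (1/q) ≤ 1/q^2 := by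
  have hq0 : 0 < q := hq0' hp2 hpq
  rcases eq_or_lt_of_le hs with h0 | h0
  · rw [← h0, Real.zero_rpow hq0.ne']
    have : 0 < 1/q^2 := by positivity
    simp only [zero_mul, sub_zero]
    linarith
  · set f : ℝ → ℝ := fun s => s ^ q * (1/q^2) - s ^ q * Real.log s * (1/q) with hf
    have hder : ∀ x : ℝ, 0 < x → HasDerivAt f (-(x ^ (q-1) * Real.log x)) x := by
      intro x hx
      have h2 : HasDerivAt (fun s : ℝ => s ^ q) (q * x ^ (q-1)) x :=
        Real.hasDerivAt_rpow_const (Or.inl hx.ne')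
      have hlog : HasDerivAt Real.log x⁻¹ x := Real.hasDerivAt_log hx.ne'
      have h3 : HasDerivAt (fun s : ℝ => s ^ q * Real.log s)
          (q * x ^ (q-1) * Real.log x + x ^ q * x⁻¹) x := h2.mul hlog
      have := (h2.mul_const (1/q^2)).sub (h3.mul_const (1/q))
      refine this.congr_deriv ?_
      have hxq : x ^ q * x⁻¹ = x ^ (q-1) := by
        rw [Real.rpow_sub hx, Real.rpow_one]; ring
      rw [hxq]
      field_simp
      ring
    have hcont : ∀ x : ℝ, 0 < x → ContinuousAt f x := fun x hx => (hder x hx).continuousAt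
    have key : f s ≤ f 1 := by
      rcases le_total s 1 with hs1 | hs1
      · have hmono : MonotoneOn f (Icc s 1) := by
          apply monotoneOn_of_deriv_nonneg (convex_Icc s 1)
          · exact fun x hx => (hcont x (lt_of_lt_of_le h0 hx.1)).continuousWithinAt
          · intro x hx
            rw [interior_Icc] at hx
            exact ((hder x (lt_trans h0 hx.1)).differentiableAt).differentiableWithinAt
          · intro x hx
            rw [interior_Icc] at hx
            rw [(hder x (lt_trans h0 hx.1)).deriv]
            have hx0 : 0 < x := lt_trans h0 hx.1
            have hlog : Real.log x ≤ 0 := Real.log_nonpos hx0.le hx.2.le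
            have : 0 ≤ x ^ (q-1) := Real.rpow_nonneg hx0.le _
            nlinarith
        exact hmono (left_mem_Icc.mpr hs1) (right_mem_Icc.mpr hs1) hs1
      · have hanti : AntitoneOn f (Icc 1 s) := by
          apply antitoneOn_of_deriv_nonpos (convex_Icc 1 s)
          · exact fun x hx => (hcont x (lt_of_lt_of_le one_pos hx.1)).continuousWithinAt
          · intro x hx
            rw [interior_Icc] at hx
            exact ((hder x (lt_trans one_pos hx.1)).differentiableAt).differentiableWithinAt
          · intro x hx
            rw [interior_Icc] at hx
            rw [(hder x (lt_trans one_pos hx.1)).deriv]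
            have hx0 : 0 < x := lt_trans one_pos hx.1
            have hlog : 0 ≤ Real.log x := Real.log_nonneg hx.1.le
            have : 0 ≤ x ^ (q-1) := Real.rpow_nonneg hx0.le _
            nlinarith
        exact hanti (left_mem_Icc.mpr hs1) (right_mem_Icc.mpr hs1) hs1
    simpa [hf, one_rpow] using key

lemma Phi_one {K A B : ℝ} : Phi p q r K A B 1 = (1/(p:ℝ)) * K + (r/q^2) * A - (1/q) * B := by
  simp [Phi, Real.one_rpow, Real.log_one]

include hp2 hpq hr in
/-- Key inequality: if `K = B ≥ 0`, `A ≥ 0`, the fibering map has max at `1`. -/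
lemma Phi_le_Phi_one {K A B : ℝ} (hK : 0 ≤ K) (hA : 0 ≤ A) (hKB : K = B)
    {s : ℝ} (hs : 0 ≤ s) : Phi p q r K A B s ≤ Phi p q r K A B 1 := by
  have h1 := bracket1 hp2 hpq hs
  have h2 := bracket2 hp2 hpq hs
  have hr0 : 0 ≤ r := by linarith
  have e1 : Phi p q r K A B s
      = K * (s ^ p * (1/(p:ℝ)) - s ^ q * (1/q))
        + (r * A) * (s ^ q * (1/q^2) - s ^ q * Real.log s * (1/q)) := by
    rw [Phi, hKB]; ring
  have e2 : Phi p q r K A B 1 = K * (1/(p:ℝ) - 1/q) + (r * A) * (1/q^2) := by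
    rw [Phi_one, hKB]; ring
  rw [e1, e2]
  have := mul_le_mul_of_nonneg_left h1 hK
  have := mul_le_mul_of_nonneg_left h2 (by positivity : 0 ≤ r * A)
  linarith


lemma Phi_zero {K A B : ℝ} (hp2 : 2 ≤ p) (hpq : (p:ℝ) < q) : Phi p q r K A B 0 = 0 := by
  have hq0 : 0 < q := hq0' hp2 hpq
  simp [Phi, zero_pow (by omega : p ≠ 0), Real.zero_rpow hq0.ne']

include hp2 hpq in
lemma contOn_rpow_log : ContinuousOn (fun s : ℝ => s ^ q * Real.log s) (Ici 0) := by
  have hq1 : 1 < q := by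
    have : (2:ℝ) ≤ p := by exact_mod_cast hp2
    linarith
  have hc1 : Continuous fun s : ℝ => s ^ (q - 1) :=
    Real.continuous_rpow_const (by linarith)
  have hc : Continuous fun s : ℝ => s ^ (q-1) * (s * Real.log s) :=
    hc1.mul Real.continuous_mul_log
  apply ContinuousOn.congr hc.continuousOn
  intro s hs
  show s ^ q * Real.log s = s ^ (q-1) * (s * Real.log s)
  rcases eq_or_lt_of_le (mem_Ici.mp hs) with h0 | h0
  · rw [← h0]
    rw [Real.zero_rpow (by linarith : q ≠ 0), Real.zero_rpow (by linarith : q - 1 ≠ 0)]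
    simp
  · rw [show s ^ (q-1) * (s * Real.log s) = (s ^ (q-1) * s ^ (1:ℝ)) * Real.log s by
      rw [Real.rpow_one]; ring, ← Real.rpow_add h0]
    norm_num

include hp2 hpq in
lemma Phi_contOn {K A B : ℝ} : ContinuousOn (Phi p q r K A B) (Ici 0) := by
  have hq0 : 0 < q := hq0' hp2 hpq
  have heq : Phi p q r K A B = fun s =>
      (1/(p:ℝ)) * (s ^ p * K) + (r/q^2) * (s ^ q * A)
        - (1/q) * ((s ^ q * Real.log s) * (r * A) + s ^ q * B) := by
    funext s; rw [Phi]; ring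
  rw [heq]
  have hcq : Continuous fun s : ℝ => s ^ q := Real.continuous_rpow_const hq0.le
  apply ContinuousOn.sub
  · apply ContinuousOn.add
    · exact (continuous_const.mul ((continuous_pow p).mul continuous_const)).continuousOn
    · exact (continuous_const.mul (hcq.mul continuous_const)).continuousOn
  · apply ContinuousOn.mul continuousOn_const
    apply ContinuousOn.add
    · exact ((contOn_rpow_log hp2 hpq).mul continuousOn_const)
    · exact (hcq.mul continuous_const).continuousOn

include hp2 hpq hr in
lemma Phi_tendsto_atBot {K A B : ℝ} (hA : 0 < A) :
    Tendsto (Phi p q r K A B) atTop atBot := by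
  have hp0 : (0:ℝ) < p := hp0' hp2
  have hq0 : 0 < q := hq0' hp2 hpq
  set G : ℝ → ℝ := fun s =>
    (s ^ ((p:ℝ) - q) * (K/(p:ℝ)) + ((r/q^2) * A - (1/q) * B)) + (-(((r/q) * A) * Real.log s))
    with hG
  have hGbot : Tendsto G atTop atBot := by
    have t1 : Tendsto (fun s : ℝ => s ^ ((p:ℝ) - q) * (K/(p:ℝ)) + ((r/q^2)*A - (1/q)*B))
        atTop (𝓝 (0 * (K/(p:ℝ)) + ((r/q^2)*A - (1/q)*B))) := by
      apply Tendsto.add _ tendsto_const_nhds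
      apply Tendsto.mul_const
      have := tendsto_rpow_neg_atTop (by linarith : 0 < q - (p:ℝ))
      simpa [neg_sub] using this
    have t2 : Tendsto (fun s : ℝ => -(((r/q) * A) * Real.log s)) atTop atBot := by
      apply tendsto_neg_atTop_atBot.comp
      exact Real.tendsto_log_atTop.const_mul_atTop (by positivity)
    exact t1.add_atBot t2
  have hmul := (tendsto_rpow_atTop hq0).atTop_mul_atBot₀ hGbot
  apply hmul.congr'
  filter_upwards [eventually_gt_atTop (0:ℝ)] with s hs
  have h1 : s ^ q * s ^ ((p:ℝ) - q) = s ^ p := by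
    rw [← Real.rpow_add hs, ← Real.rpow_natCast s p]
    ring_nf
  rw [Phi, hG, mul_add, mul_add, ← mul_assoc, h1]
  ring

include hp2 hpq hr in
lemma Phi_bddAbove {K A B : ℝ} (hA : 0 < A) :
    ∃ C : ℝ, 0 ≤ C ∧ ∀ s, 0 ≤ s → Phi p q r K A B s ≤ C := by
  obtain ⟨T, hT⟩ := eventually_atTop.mp
    ((Phi_tendsto_atBot hp2 hpq hr hA).eventually (eventually_le_atBot 0))
  set T' := max T 0 with hT'
  obtain ⟨x₀, hx₀, hmax⟩ := (isCompact_Icc (a := (0:ℝ)) (b := T')).exists_isMaxOn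
    ⟨0, by simp [hT', le_max_right]⟩
    ((Phi_contOn hp2 hpq).mono (fun x hx => hx.1))
  refine ⟨max (Phi p q r K A B x₀) 0, le_max_right _ _, fun s hs => ?_⟩
  rcases le_total s T' with h | h
  · exact le_trans (hmax ⟨hs, h⟩) (le_max_left _ _)
  · exact le_trans (hT s (le_trans (le_max_left _ _) h)) (le_max_right _ _)

variable {e : ℝ}

lemma tendsto_small (he : 0 < e) (C1 C2 : ℝ) :
    Tendsto (fun s : ℝ => s ^ e * (C1 * Real.log s + C2)) (𝓝[>] (0:ℝ)) (𝓝 0) := by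
  have t1 : Tendsto (fun x : ℝ => Real.log x * x ^ e) (𝓝[>] (0:ℝ)) (𝓝 0) :=
    tendsto_log_mul_rpow_nhdsGT_zero he
  have t2 : Tendsto (fun x : ℝ => x ^ e) (𝓝[>] (0:ℝ)) (𝓝 0) := by
    have hc : ContinuousAt (fun x : ℝ => x ^ e) 0 :=
      Real.continuousAt_rpow_const 0 e (Or.inr he.le)
    have : Tendsto (fun x : ℝ => x ^ e) (𝓝[>] (0:ℝ)) (𝓝 ((0:ℝ) ^ e)) :=
      hc.tendsto.mono_left nhdsWithin_le_nhds
    rwa [Real.zero_rpow he.ne'] at this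
  have := (t1.const_mul C1).add (t2.const_mul C2)
  simp only [mul_zero, add_zero] at this
  apply this.congr
  intro s; ring

include hp2 hpq in
lemma eventually_pos_near_zero {K : ℝ} (hK : 0 < K) (C1 C2 : ℝ) :
    ∀ᶠ s in 𝓝[>] (0:ℝ), 0 < s ^ p * K - s ^ q * (C1 * Real.log s + C2) := by
  have hsmall := tendsto_small (e := q - (p:ℝ)) (by linarith) C1 C2
  have hev := hsmall.eventually (eventually_lt_nhds hK)
  filter_upwards [hev, self_mem_nhdsWithin] with s h1 h2
  have hs0 : (0:ℝ) < s := h2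
  have key : s ^ q * (C1 * Real.log s + C2)
      = s ^ p * (s ^ (q - (p:ℝ)) * (C1 * Real.log s + C2)) := by
    rw [← mul_assoc, ← Real.rpow_natCast s p, ← Real.rpow_add hs0]
    ring_nf
  rw [key]
  have hsp : (0:ℝ) < s ^ p := pow_pos hs0 p
  nlinarith

include hp2 hpq hr in
lemma Phi_pos_near_zero {K A B : ℝ} (hK : 0 < K) :
    ∀ᶠ s in 𝓝[>] (0:ℝ), 0 < Phi p q r K A B s := by
  have hp0 : (0:ℝ) < p := hp0' hp2
  have hq0 : 0 < q := hq0' hp2 hpq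
  filter_upwards [eventually_pos_near_zero hp2 hpq (by positivity : 0 < K/(p:ℝ))
    ((r*A)/q) (B/q - (r*A)/q^2)] with s hs
  have : s ^ p * (K/(p:ℝ)) - s ^ q * (((r*A)/q) * Real.log s + (B/q - (r*A)/q^2))
      = Phi p q r K A B s := by
    rw [Phi]; field_simp; ring
  linarith [hs, this ▸ hs]

include hp2 hpq hr in
lemma exists_fiber_zero {K A B : ℝ} (hK : 0 < K) (hA : 0 < A) :
    ∃ s : ℝ, 0 < s ∧ s ^ p * K - s ^ q * (r * Real.log s * A + B) = 0 := by
  have hp0 : (0:ℝ) < p := hp0' hp2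
  have hq0 : 0 < q := hq0' hp2 hpq
  set f : ℝ → ℝ := fun s => s ^ p * K - s ^ q * (r * Real.log s * A + B) with hf
  -- positive for small s
  have hpos : ∀ᶠ s in 𝓝[>] (0:ℝ), 0 < f s := by
    filter_upwards [eventually_pos_near_zero hp2 hpq hK (r*A) B] with s hs
    show 0 < s ^ p * K - s ^ q * (r * Real.log s * A + B)
    have h' : s ^ q * (r * Real.log s * A + B) = s ^ q * (r * A * Real.log s + B) := by ring
    linarith
  obtain ⟨s1, hs1f, hs1⟩ := (hpos.and self_mem_nhdsWithin).exists
  have hs1' : (0:ℝ) < s1 := hs1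
  -- negative for large s
  have hneg : ∀ᶠ s in atTop, f s < 0 := by
    set g : ℝ → ℝ := fun s => (s ^ ((p:ℝ) - q) * K) + (-(r * Real.log s * A + B)) with hg
    have hgbot : Tendsto g atTop atBot := by
      have t1 : Tendsto (fun s : ℝ => s ^ ((p:ℝ) - q) * K) atTop (𝓝 (0 * K)) := by
        apply Tendsto.mul_const
        have := tendsto_rpow_neg_atTop (by linarith : 0 < q - (p:ℝ))
        simpa [neg_sub] using this
      have t2 : Tendsto (fun s : ℝ => -(r * Real.log s * A + B)) atTop atBot := by
        apply tendsto_neg_atTop_atBot.comp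
        apply tendsto_atTop_add_const_right
        have := Real.tendsto_log_atTop.const_mul_atTop (by positivity : 0 < r * A)
        apply this.congr; intro s; ring
      exact t1.add_atBot t2
    have := (tendsto_rpow_atTop hq0).atTop_mul_atBot₀ hgbot
    have hbot := this.eventually (eventually_lt_atBot 0)
    filter_upwards [hbot, eventually_gt_atTop (0:ℝ)] with s hs hs0
    have h1 : s ^ q * s ^ ((p:ℝ) - q) = s ^ p := by
      rw [← Real.rpow_add hs0, ← Real.rpow_natCast s p]; ring_nf
    have : s ^ q * g s = f s := by
      rw [hg, hf, mul_add, ← mul_assoc, h1]; ring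
    linarith [this ▸ hs]
  obtain ⟨s2, hs2f, hs2⟩ := (hneg.and (eventually_gt_atTop (max s1 1))).exists
  have hs12 : s1 < s2 := lt_of_le_of_lt (le_max_left _ _) hs2
  have hs2' : (0:ℝ) < s2 := lt_trans hs1' hs12
  -- IVT
  have hcont : ContinuousOn f (Icc s1 s2) := by
    intro x hx
    have hx0 : 0 < x := lt_of_lt_of_le hs1' hx.1
    apply ContinuousAt.continuousWithinAt
    apply ContinuousAt.sub
    · exact ((continuous_pow p).continuousAt).mul continuousAt_const
    · apply ContinuousAt.mul
      · exact Real.continuousAt_rpow_const x q (Or.inl hx0.ne')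
      · apply ContinuousAt.add _ continuousAt_const
        exact (continuousAt_const.mul (Real.continuousAt_log hx0.ne')).mul continuousAt_const
  have hsub := intermediate_value_Icc' hs12.le hcont
  have h0mem : (0:ℝ) ∈ Icc (f s2) (f s1) := ⟨hs2f.le, hs1f.le⟩
  obtain ⟨x, hx, hfx⟩ := hsub h0mem
  exact ⟨x, lt_of_lt_of_le hs1' hx.1, hfx⟩


end scalars

section scalars2

variable {p : ℕ} {q r : ℝ}

lemma pow_tangent (hpe : Even p) (hp2 : 2 ≤ p) (x y : ℝ) :
    x ^ p + (p:ℝ) * x ^ (p-1) * (y - x) ≤ y ^ p := by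
  have hodd : Odd (p-1) := Nat.Even.sub_odd (by omega) hpe odd_one
  have hmono := hodd.strictMono_pow (R := ℝ)
  set F : ℝ → ℝ := fun t => t ^ p - ((p:ℝ) * x ^ (p-1)) * t with hF
  have hder : ∀ t : ℝ, HasDerivAt F ((p:ℝ) * t ^ (p-1) - (p:ℝ) * x ^ (p-1)) t := by
    intro t
    have h1 : HasDerivAt (fun t : ℝ => t ^ p) ((p:ℝ) * t ^ (p-1)) t := hasDerivAt_pow p t
    have h2 : HasDerivAt (fun t : ℝ => ((p:ℝ) * x ^ (p-1)) * t) ((p:ℝ) * x ^ (p-1)) t := by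
      simpa using (hasDerivAt_id t).const_mul ((p:ℝ) * x ^ (p-1))
    exact h1.sub h2
  have hkey : F x ≤ F y := by
    rcases le_total x y with hxy | hxy
    · have hmo : MonotoneOn F (Icc x y) := by
        apply monotoneOn_of_deriv_nonneg (convex_Icc x y)
          (fun t _ => (hder t).continuousAt.continuousWithinAt)
          (fun t _ => (hder t).differentiableAt.differentiableWithinAt)
        intro t ht
        rw [interior_Icc] at ht
        rw [(hder t).deriv]
        have : x ^ (p-1) ≤ t ^ (p-1) := (hmono.monotone) ht.1.le
        have hp0 : (0:ℝ) ≤ p := by positivity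
        nlinarith
      exact hmo (left_mem_Icc.mpr hxy) (right_mem_Icc.mpr hxy) hxy
    · have hmo : AntitoneOn F (Icc y x) := by
        apply antitoneOn_of_deriv_nonpos (convex_Icc y x)
          (fun t _ => (hder t).continuousAt.continuousWithinAt)
          (fun t _ => (hder t).differentiableAt.differentiableWithinAt)
        intro t ht
        rw [interior_Icc] at ht
        rw [(hder t).deriv]
        have : t ^ (p-1) ≤ x ^ (p-1) := (hmono.monotone) ht.2.le
        have hp0 : (0:ℝ) ≤ p := by positivity
        nlinarith
      exact hmo (left_mem_Icc.mpr hxy) (right_mem_Icc.mpr hxy) hxy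
  rw [hF] at hkey
  simp only at hkey
  nlinarith [hkey]

lemma convex_split (hpe : Even p) (hp2 : 2 ≤ p) {x y s t : ℝ}
    (hx : 0 ≤ x) (hy : 0 ≤ y) (hs : 0 ≤ s) (ht : 0 ≤ t) :
    (s * x + t * y) ^ p ≤ (x + y) ^ (p-1) * (s ^ p * x + t ^ p * y) := by
  rcases eq_or_lt_of_le (by positivity : (0:ℝ) ≤ x + y) with h0 | h0
  · have hx0 : x = 0 := by linarith
    have hy0 : y = 0 := by linarith
    rw [hx0, hy0]
    simp [zero_pow (by omega : p ≠ 0)]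
  · have hcvx := (Even.convexOn_pow (𝕜 := ℝ) hpe).2 (mem_univ (s*(x+y))) (mem_univ (t*(x+y)))
      (by positivity : (0:ℝ) ≤ x/(x+y)) (by positivity : (0:ℝ) ≤ y/(x+y))
      (by field_simp)
    simp only [smul_eq_mul] at hcvx
    have e1 : x/(x+y)*(s*(x+y)) + y/(x+y)*(t*(x+y)) = s*x + t*y := by
      field_simp
    have e2 : x/(x+y)*(s*(x+y))^p + y/(x+y)*(t*(x+y))^p
        = (x+y)^(p-1)*(s^p*x + t^p*y) := by
      rw [mul_pow, mul_pow, show p = (p-1)+1 by omega, pow_succ]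
      have hne : x + y ≠ 0 := h0.ne'
      field_simp
      rw [Nat.add_sub_cancel]
      ring
    rw [e1, e2] at hcvx
    exact hcvx

lemma Phi_hasDeriv (hp2 : 2 ≤ p) (hpq : (p:ℝ) < q) {K A B s : ℝ} (hs : 0 < s) :
    HasDerivAt (Phi p q r K A B)
      (s ^ (p-1) * K - s ^ (q-1) * (r * A * Real.log s + B)) s := by
  have hp0 : (0:ℝ) < p := hp0' hp2
  have hq0 : 0 < q := hq0' hp2 hpq
  have d1 : HasDerivAt (fun s : ℝ => (1/(p:ℝ)) * (s ^ p * K))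
      ((1/(p:ℝ)) * (((p:ℝ) * s ^ (p-1)) * K)) s :=
    ((hasDerivAt_pow p s).mul_const K).const_mul _
  have hq' : HasDerivAt (fun s : ℝ => s ^ q) (q * s ^ (q-1)) s :=
    Real.hasDerivAt_rpow_const (Or.inl hs.ne')
  have d2 : HasDerivAt (fun s : ℝ => (r/q^2) * (s ^ q * A))
      ((r/q^2) * ((q * s ^ (q-1)) * A)) s := (hq'.mul_const A).const_mul _
  have dlog : HasDerivAt (fun s : ℝ => r * Real.log s * A) (r * s⁻¹ * A) s := by
    exact ((Real.hasDerivAt_log hs.ne').const_mul r).mul_const A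
  have d3 : HasDerivAt (fun s : ℝ => s ^ q * (r * Real.log s * A))
      ((q * s ^ (q-1)) * (r * Real.log s * A) + s ^ q * (r * s⁻¹ * A)) s :=
    hq'.mul dlog
  have d4 : HasDerivAt (fun s : ℝ => s ^ q * B) ((q * s ^ (q-1)) * B) s := hq'.mul_const B
  have D := (d1.add d2).sub ((d3.add d4).const_mul (1/q))
  have hPhi : Phi p q r K A B = fun s =>
      (1/(p:ℝ)) * (s ^ p * K) + (r/q^2) * (s ^ q * A)
        - (1/q) * (s ^ q * (r * Real.log s * A) + s ^ q * B) := rfl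
  rw [hPhi]
  refine D.congr_deriv ?_
  have e1 : s ^ q * (r * s⁻¹ * A) = s ^ (q-1) * (r * A) := by
    rw [show s ^ q * (r * s⁻¹ * A) = (s ^ q * s⁻¹) * (r * A) by ring]
    congr 1
    rw [← Real.rpow_neg_one s, ← Real.rpow_add hs]
    ring_nf
  rw [e1]
  field_simp
  ring

lemma foc_aux {P : ℝ → ℝ} {d L s₀ : ℝ} (hP : HasDerivAt P d s₀)
    (hle : ∀ᶠ s in 𝓝 s₀, (s - s₀) * L + P s ≤ P s₀) : L + d = 0 := by
  have hmax : IsLocalMax (fun s => (s - s₀) * L + P s) s₀ := by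
    filter_upwards [hle] with s hs
    show (s - s₀) * L + P s ≤ (s₀ - s₀) * L + P s₀
    simpa using hs
  have hD : HasDerivAt (fun s => (s - s₀) * L + P s) (L + d) s₀ := by
    have h1 : HasDerivAt (fun s : ℝ => (s - s₀) * L) L s₀ := by
      simpa using ((hasDerivAt_id s₀).sub_const s₀).mul_const L
    exact h1.add hP
  exact hmax.hasDerivAt_eq_zero hD

lemma Phi_one_nonneg (hp2 : 2 ≤ p) (hpq : (p:ℝ) < q) (hr : 1 ≤ r)
    {K A B : ℝ} (hK : 0 ≤ K) (hA : 0 ≤ A) (hKB : K = B) :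
    0 ≤ Phi p q r K A B 1 := by
  have hp0 : (0:ℝ) < p := hp0' hp2
  have hq0 : 0 < q := hq0' hp2 hpq
  rw [Phi_one, ← hKB]
  have h1 : 1/q ≤ 1/(p:ℝ) := one_div_le_one_div_of_le hp0 hpq.le
  have h2 : (1/q) * K ≤ (1/(p:ℝ)) * K := mul_le_mul_of_nonneg_right h1 hK
  have h3 : 0 ≤ (r/q^2) * A := mul_nonneg (div_nonneg (by linarith) (by positivity)) hA
  linarith

lemma Phi_K_mono {K K' A B s : ℝ} (h : K ≤ K') (hs : 0 ≤ s) :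
    Phi p q r K A B s ≤ Phi p q r K' A B s := by
  have : Phi p q r K' A B s - Phi p q r K A B s = (1/(p:ℝ)) * s ^ p * (K' - K) := by
    rw [Phi, Phi]; ring
  nlinarith [pow_nonneg hs p, this, mul_nonneg (mul_nonneg
    (by positivity : (0:ℝ) ≤ 1/(p:ℝ)) (pow_nonneg hs p)) (by linarith : 0 ≤ K' - K)]

lemma Phi_add_K {D K A B : ℝ} (s : ℝ) :
    Phi p q r (D + K) A B s = (1/(p:ℝ)) * (s ^ p * D) + Phi p q r K A B s := by
  rw [Phi, Phi]; ring

end scalars2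
section seq

variable {p : ℕ} {q r : ℝ} {a b c : ℤ → ℝ} {u : ℤ → ℝ}

lemma nsum_nonneg (ha : ∀ n, 0 < a n) (hb : ∀ n, 0 < b n) (u : ℤ → ℝ) (n : ℤ) :
    0 ≤ nsum a b p u n := by
  show 0 ≤ a n * |dlt u n| ^ p + b n * |u n| ^ p
  exact add_nonneg (mul_nonneg (ha n).le (by positivity)) (mul_nonneg (hb n).le (by positivity))

lemma summable_b_abs (ha : ∀ n, 0 < a n) (hb : ∀ n, 0 < b n) (hu : memE a b p u) :
    Summable (fun n => b n * |u n| ^ p) := by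
  apply Summable.of_nonneg_of_le (fun n => mul_nonneg (hb n).le (by positivity)) _ hu
  intro n
  show b n * |u n| ^ p ≤ a n * |dlt u n| ^ p + b n * |u n| ^ p
  have : 0 ≤ a n * |dlt u n| ^ p := mul_nonneg (ha n).le (by positivity)
  linarith

lemma abs_le_bound (hp2 : 2 ≤ p) (ha : ∀ n, 0 < a n) (hb : ∀ n, 0 < b n)
    {b0 : ℝ} (hb0 : 0 < b0) (hbb : ∀ n, b0 ≤ b n) (hu : memE a b p u) :
    ∃ M : ℝ, 0 ≤ M ∧ ∀ n, |u n| ≤ M := by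
  have hsb := summable_b_abs ha hb hu
  set S := ∑' n, b n * |u n| ^ p with hS
  have hS0 : 0 ≤ S := tsum_nonneg (fun n => mul_nonneg (hb n).le (by positivity))
  refine ⟨(S / b0) ^ ((p:ℝ)⁻¹), Real.rpow_nonneg (div_nonneg hS0 hb0.le) _, fun n => ?_⟩
  have h1 : |u n| ^ p ≤ S / b0 := by
    rw [le_div_iff₀ hb0]
    have h2 : b0 * |u n| ^ p ≤ b n * |u n| ^ p :=
      mul_le_mul_of_nonneg_right (hbb n) (by positivity)
    have h3 : b n * |u n| ^ p ≤ S :=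
      Summable.le_tsum hsb n (fun j _ => mul_nonneg (hb j).le (by positivity))
    linarith [h2.trans h3]
  have hkey : |u n| = ((|u n| ^ p : ℝ)) ^ ((p:ℝ)⁻¹) := by
    rw [← Real.rpow_natCast |u n| p, ← Real.rpow_mul (abs_nonneg _)]
    rw [mul_inv_cancel₀ (by positivity : ((p:ℝ)) ≠ 0), Real.rpow_one]
  rw [hkey]
  exact Real.rpow_le_rpow (by positivity) h1 (by positivity)

lemma summable_cq (hq0 : 0 < q) (hc : ∀ n, 0 < c n) (hcsum : Summable c)
    {M : ℝ} (hM0 : 0 ≤ M) (hM : ∀ n, |u n| ≤ M) :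
    Summable (fun n => c n * |u n| ^ q) := by
  apply Summable.of_nonneg_of_le
    (fun n => mul_nonneg (hc n).le (Real.rpow_nonneg (abs_nonneg (u n)) q))
    _ (hcsum.mul_right (M ^ q))
  intro n
  exact mul_le_mul_of_nonneg_left
    (Real.rpow_le_rpow (abs_nonneg _) (hM n) hq0.le) (hc n).le

lemma exists_ne_zero (hne : u ≠ 0) : ∃ n, u n ≠ 0 := by
  by_contra h
  push_neg at h
  exact hne (funext h)

lemma tsum_nsum_pos (hp2 : 2 ≤ p) (ha : ∀ n, 0 < a n) (hb : ∀ n, 0 < b n)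
    (hu : memE a b p u) (hne : u ≠ 0) : 0 < ∑' n, nsum a b p u n := by
  obtain ⟨n0, hn0⟩ := exists_ne_zero hne
  have hlt : 0 < nsum a b p u n0 := by
    show 0 < a n0 * |dlt u n0| ^ p + b n0 * |u n0| ^ p
    have h1 : 0 < b n0 * |u n0| ^ p := mul_pos (hb n0) (pow_pos (abs_pos.mpr hn0) p)
    have h2 : 0 ≤ a n0 * |dlt u n0| ^ p := mul_nonneg (ha n0).le (by positivity)
    linarith
  exact lt_of_lt_of_le hlt (Summable.le_tsum hu n0 (fun j _ => nsum_nonneg ha hb u j))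

lemma tsum_cq_pos (hq0 : 0 < q) (hc : ∀ n, 0 < c n)
    (hsum : Summable (fun n => c n * |u n| ^ q)) (hne : u ≠ 0) :
    0 < ∑' n, c n * |u n| ^ q := by
  obtain ⟨n0, hn0⟩ := exists_ne_zero hne
  have hlt : 0 < c n0 * |u n0| ^ q :=
    mul_pos (hc n0) (Real.rpow_pos_of_pos (abs_pos.mpr hn0) q)
  apply lt_of_lt_of_le hlt
  exact Summable.le_tsum hsum n0
    (fun j _ => mul_nonneg (hc j).le (Real.rpow_nonneg (abs_nonneg (u j)) q))

lemma tsum_cq_nonneg (hc : ∀ n, 0 < c n) (u : ℤ → ℝ) : 0 ≤ ∑' n, c n * |u n| ^ q :=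
  tsum_nonneg (fun n => mul_nonneg (hc n).le (Real.rpow_nonneg (abs_nonneg (u n)) q))

lemma dnorm_pow_eq (hp2 : 2 ≤ p) (ha : ∀ n, 0 < a n) (hb : ∀ n, 0 < b n) (u : ℤ → ℝ) :
    dnorm a b p u ^ p = ∑' n, nsum a b p u n := by
  have h0 : 0 ≤ ∑' n, nsum a b p u n := tsum_nonneg (nsum_nonneg ha hb u)
  rw [dnorm, ← Real.rpow_natCast ((∑' n, nsum a b p u n) ^ ((p:ℝ)⁻¹)) p,
    ← Real.rpow_mul h0, inv_mul_cancel₀ (by positivity : ((p:ℝ)) ≠ 0), Real.rpow_one]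

lemma abs_pow_self (hp2 : 2 ≤ p) (x : ℝ) : |x| ^ (p-2) * x * x = |x| ^ p := by
  rw [mul_assoc, ← abs_mul_abs_self x, ← mul_assoc, ← pow_succ, ← pow_succ]
  congr 1
  omega

lemma c_term_self (hq0 : q ≠ 0) (cn x : ℝ) :
    cn * |x| ^ (q-2) * x * x * Real.log (|x| ^ r)
      = cn * |x| ^ q * Real.log (|x| ^ r) := by
  rcases eq_or_ne x 0 with h | h
  · subst h
    simp [Real.zero_rpow hq0]
  · have hx : 0 < |x| := abs_pos.mpr h
    have key : |x| ^ (q-2) * x * x = |x| ^ q := by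
      rw [mul_assoc, ← abs_mul_abs_self x,
        show |x| ^ (q-2) * (|x| * |x|) = |x| ^ (q-2) * |x| ^ (1:ℝ) * |x| ^ (1:ℝ) by
          rw [Real.rpow_one]; ring,
        ← Real.rpow_add hx, ← Real.rpow_add hx]
      congr 1
      ring
    calc cn * |x| ^ (q-2) * x * x * Real.log (|x| ^ r)
        = cn * (|x| ^ (q-2) * x * x) * Real.log (|x| ^ r) := by ring
      _ = cn * |x| ^ q * Real.log (|x| ^ r) := by rw [key]

lemma pr_self_eq (hp2 : 2 ≤ p) (hq0 : q ≠ 0) (u : ℤ → ℝ) :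
    pr a b c p q r u u = (∑' n, nsum a b p u n) - ∑' n, logSummand c q r u n := by
  rw [pr]
  congr 1
  · apply tsum_congr
    intro n
    have h1 : a n * |dlt u n| ^ (p-2) * dlt u n * dlt u n = a n * |dlt u n| ^ p := by
      rw [← abs_pow_self hp2 (dlt u n)]; ring
    have h2 : b n * |u n| ^ (p-2) * u n * u n = b n * |u n| ^ p := by
      rw [← abs_pow_self hp2 (u n)]; ring
    rw [h1, h2]
    rfl
  · exact tsum_congr fun n => c_term_self hq0 (c n) (u n)

/-! Scaling lemmas -/

lemma dlt_smul (t : ℝ) (u : ℤ → ℝ) (n : ℤ) : dlt (fun n => t * u n) n = t * dlt u n := by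
  show t * u (n+1) - t * u n = t * (u (n+1) - u n)
  ring

lemma nsum_smul (ht : 0 ≤ t) (u : ℤ → ℝ) (n : ℤ) :
    nsum a b p (fun n => t * u n) n = t ^ p * nsum a b p u n := by
  show a n * |dlt (fun n => t * u n) n| ^ p + b n * |t * u n| ^ p
    = t ^ p * (a n * |dlt u n| ^ p + b n * |u n| ^ p)
  rw [dlt_smul, abs_mul, abs_mul, abs_of_nonneg ht, mul_pow, mul_pow]
  ring

lemma tsum_nsum_smul (ht : 0 ≤ t) (u : ℤ → ℝ) :
    ∑' n, nsum a b p (fun n => t * u n) n = t ^ p * ∑' n, nsum a b p u n := by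
  rw [← tsum_mul_left]
  exact tsum_congr (nsum_smul ht u)

lemma memE_smul (ht : 0 ≤ t) (hu : memE a b p u) : memE a b p (fun n => t * u n) := by
  exact Summable.congr (hu.mul_left (t ^ p)) (fun n => (nsum_smul ht u n).symm)

lemma cq_smul (hq0 : 0 < q) (ht : 0 ≤ t) (u : ℤ → ℝ) (n : ℤ) :
    c n * |t * u n| ^ q = t ^ q * (c n * |u n| ^ q) := by
  rw [abs_mul, abs_of_nonneg ht, Real.mul_rpow ht (abs_nonneg _)]
  ring

lemma tsum_cq_smul (hq0 : 0 < q) (ht : 0 ≤ t) (u : ℤ → ℝ) :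
    ∑' n, c n * |t * u n| ^ q = t ^ q * ∑' n, c n * |u n| ^ q := by
  rw [← tsum_mul_left]
  exact tsum_congr (cq_smul hq0 ht u)

lemma logSummand_smul (hq0 : 0 < q) (hr1 : 1 ≤ r) (ht : 0 < t) (u : ℤ → ℝ) (n : ℤ) :
    logSummand c q r (fun n => t * u n) n
      = t ^ q * (r * Real.log t * (c n * |u n| ^ q)) + t ^ q * logSummand c q r u n := by
  have hr0 : r ≠ 0 := by linarith
  rcases eq_or_ne (u n) 0 with h | h
  · have L : logSummand c q r (fun n => t * u n) n = 0 := by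
      show c n * |t * u n| ^ q * Real.log (|t * u n| ^ r) = 0
      rw [h, mul_zero, abs_zero, Real.zero_rpow hq0.ne']
      ring
    have R1 : c n * |u n| ^ q = 0 := by
      rw [h, abs_zero, Real.zero_rpow hq0.ne', mul_zero]
    have R2 : logSummand c q r u n = 0 := by
      show c n * |u n| ^ q * Real.log (|u n| ^ r) = 0
      rw [R1, zero_mul]
    rw [L, R1, R2]
    ring
  · have hx : 0 < |u n| := abs_pos.mpr h
    show c n * |t * u n| ^ q * Real.log (|t * u n| ^ r) = _
    rw [abs_mul, abs_of_nonneg ht.le, Real.mul_rpow ht.le (abs_nonneg _),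
      Real.mul_rpow ht.le (abs_nonneg _),
      Real.log_mul (by positivity) (by positivity),
      Real.log_rpow ht]
    show c n * (t ^ q * |u n| ^ q) * (r * Real.log t + Real.log (|u n| ^ r)) = _
    rw [logSummand]
    ring

lemma summable_logSummand_smul (hq0 : 0 < q) (hr1 : 1 ≤ r) (ht : 0 < t)
    (hcq : Summable (fun n => c n * |u n| ^ q)) (hlog : Summable (logSummand c q r u)) :
    Summable (logSummand c q r (fun n => t * u n)) := by
  have heq : logSummand c q r (fun n => t * u n)
      = fun n => t ^ q * (r * Real.log t * (c n * |u n| ^ q)) + t ^ q * logSummand c q r u n :=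
    funext (logSummand_smul hq0 hr1 ht u)
  rw [heq]
  exact (((hcq.mul_left _).mul_left _).add (hlog.mul_left _))

lemma tsum_logSummand_smul (hq0 : 0 < q) (hr1 : 1 ≤ r) (ht : 0 < t)
    (hcq : Summable (fun n => c n * |u n| ^ q)) (hlog : Summable (logSummand c q r u)) :
    ∑' n, logSummand c q r (fun n => t * u n) n
      = t ^ q * (r * Real.log t * ∑' n, c n * |u n| ^ q + ∑' n, logSummand c q r u n) := by
  have heq := funext (logSummand_smul (c := c) hq0 hr1 ht u)
  calc ∑' n, logSummand c q r (fun n => t * u n) n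
      = ∑' n, (t ^ q * (r * Real.log t * (c n * |u n| ^ q)) + t ^ q * logSummand c q r u n) :=
        tsum_congr (fun n => by rw [heq])
    _ = (∑' n, t ^ q * (r * Real.log t * (c n * |u n| ^ q)))
          + ∑' n, t ^ q * logSummand c q r u n :=
        Summable.tsum_add ((hcq.mul_left _).mul_left _) (hlog.mul_left _)
    _ = t ^ q * (r * Real.log t * ∑' n, c n * |u n| ^ q + ∑' n, logSummand c q r u n) := by
        rw [tsum_mul_left, tsum_mul_left, tsum_mul_left]
        ring

lemma memD_smul (hp2 : 2 ≤ p) (hq0 : 0 < q) (hr1 : 1 ≤ r) (ht : 0 < t)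
    (hu : memD a b c p q r u) (hcq : Summable (fun n => c n * |u n| ^ q)) :
    memD a b c p q r (fun n => t * u n) :=
  ⟨memE_smul ht.le hu.1, summable_logSummand_smul hq0 hr1 ht hcq hu.2⟩

lemma En_smul (hp2 : 2 ≤ p) (hpq : (p:ℝ) < q) (hr1 : 1 ≤ r)
    (ha : ∀ n, 0 < a n) (hb : ∀ n, 0 < b n) (ht : 0 < t)
    (hcq : Summable (fun n => c n * |u n| ^ q)) (hlog : Summable (logSummand c q r u)) :
    En a b c p q r (fun n => t * u n)
      = Phi p q r (∑' n, nsum a b p u n) (∑' n, c n * |u n| ^ q)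
          (∑' n, logSummand c q r u n) t := by
  have hq0 : 0 < q := hq0' hp2 hpq
  rw [En, dnorm_pow_eq hp2 ha hb, tsum_nsum_smul ht.le, tsum_cq_smul hq0 ht.le,
    tsum_logSummand_smul hq0 hr1 ht hcq hlog, Phi]
  ring

lemma pr_self_smul (hp2 : 2 ≤ p) (hpq : (p:ℝ) < q) (hr1 : 1 ≤ r) (ht : 0 < t)
    (hcq : Summable (fun n => c n * |u n| ^ q)) (hlog : Summable (logSummand c q r u)) :
    pr a b c p q r (fun n => t * u n) (fun n => t * u n)
      = t ^ p * (∑' n, nsum a b p u n)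
        - t ^ q * (r * Real.log t * (∑' n, c n * |u n| ^ q) + ∑' n, logSummand c q r u n) := by
  have hq0 : 0 < q := hq0' hp2 hpq
  rw [pr_self_eq hp2 hq0.ne' _, tsum_nsum_smul ht.le,
    tsum_logSummand_smul hq0 hr1 ht hcq hlog]

lemma En_zero_smul (hp2 : 2 ≤ p) (hpq : (p:ℝ) < q) (u : ℤ → ℝ) :
    En a b c p q r (fun n => (0:ℝ) * u n) = 0 := by
  have hq0 : 0 < q := hq0' hp2 hpq
  have e1 : ∀ n : ℤ, nsum a b p (fun m => (0:ℝ) * u m) n = 0 := fun n => by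
    show a n * |dlt (fun m => (0:ℝ) * u m) n| ^ p + b n * |(0:ℝ) * u n| ^ p = 0
    rw [dlt_smul]
    simp [zero_pow (by omega : p ≠ 0)]
  have e2 : ∀ n : ℤ, c n * |(0:ℝ) * u n| ^ q = 0 := fun n => by
    simp [Real.zero_rpow hq0.ne']
  have e3 : ∀ n : ℤ, logSummand c q r (fun m => (0:ℝ) * u m) n = 0 := fun n => by
    show c n * |(0:ℝ) * u n| ^ q * Real.log (|(0:ℝ) * u n| ^ r) = 0
    simp [Real.zero_rpow hq0.ne']
  rw [En, dnorm, tsum_congr e1, tsum_congr e2, tsum_congr e3]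
  simp only [tsum_zero]
  rw [Real.zero_rpow (by positivity : ((p:ℝ))⁻¹ ≠ 0)]
  simp [zero_pow (by omega : p ≠ 0)]

end seq
section posneg

variable {p : ℕ} {q r : ℝ} {a b c : ℤ → ℝ} {u : ℤ → ℝ}

lemma pos_add_neg (u : ℤ → ℝ) (n : ℤ) : pos u n + neg u n = u n := by
  have := max_add_min (u n) 0
  show max (u n) 0 + min (u n) 0 = u n
  linarith

lemma pos_nonneg' (u : ℤ → ℝ) (n : ℤ) : 0 ≤ pos u n := le_max_right _ _
lemma neg_nonpos' (u : ℤ → ℝ) (n : ℤ) : neg u n ≤ 0 := min_le_right _ _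

lemma posneg_cases (u : ℤ → ℝ) (n : ℤ) :
    (0 ≤ u n ∧ pos u n = u n ∧ neg u n = 0) ∨ (u n < 0 ∧ pos u n = 0 ∧ neg u n = u n) := by
  rcases le_or_gt 0 (u n) with h | h
  · exact Or.inl ⟨h, max_eq_left h, min_eq_right h⟩
  · exact Or.inr ⟨h, max_eq_right h.le, min_eq_left h.le⟩

lemma same_sign_abs {α β : ℝ} (h : 0 ≤ α * β) : |α + β| = |α| + |β| := by
  rcases le_or_gt 0 α with h1 | h1 <;> rcases le_or_gt 0 β with h2 | h2
  · rw [abs_of_nonneg h1, abs_of_nonneg h2, abs_of_nonneg (by linarith)]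
  · have hα : α = 0 := by nlinarith
    rw [hα]; simp
  · have hβ : β = 0 := by nlinarith
    rw [hβ]; simp
  · rw [abs_of_neg h1, abs_of_neg h2, abs_of_neg (by linarith)]; ring

lemma same_sign_mul {α β : ℝ} (h : 0 ≤ α * β) : (α + β) * α = |α + β| * |α| := by
  rcases le_or_gt 0 α with h1 | h1 <;> rcases le_or_gt 0 β with h2 | h2
  · rw [abs_of_nonneg (by linarith : (0:ℝ) ≤ α + β), abs_of_nonneg h1]
  · have hα : α = 0 := by nlinarith
    rw [hα]; simp
  · have hβ : β = 0 := by nlinarith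
    rw [hβ, add_zero]
    exact (abs_mul_abs_self α).symm
  · rw [abs_of_neg (by linarith : α + β < 0), abs_of_neg h1]; ring

lemma maxmin_prod (x y : ℝ) : 0 ≤ (max x 0 - max y 0) * (min x 0 - min y 0) := by
  rcases le_or_gt 0 x with hx | hx <;> rcases le_or_gt 0 y with hy | hy
  · rw [min_eq_right hx, min_eq_right hy]; simp
  · rw [max_eq_left hx, min_eq_right hx, max_eq_right hy.le, min_eq_left hy.le]
    nlinarith
  · rw [max_eq_right hx.le, max_eq_left hy, min_eq_left hx.le, min_eq_right hy]
    nlinarith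
  · rw [max_eq_right hx.le, max_eq_right hy.le]; simp

lemma dlt_add (u : ℤ → ℝ) (n : ℤ) : dlt u n = dlt (pos u) n + dlt (neg u) n := by
  show u (n+1) - u n = (pos u (n+1) - pos u n) + (neg u (n+1) - neg u n)
  rw [← pos_add_neg u (n+1), ← pos_add_neg u n]
  ring

lemma dlt_mul_nonneg (u : ℤ → ℝ) (n : ℤ) : 0 ≤ dlt (pos u) n * dlt (neg u) n :=
  maxmin_prod (u (n+1)) (u n)

lemma abs_dlt_split (u : ℤ → ℝ) (n : ℤ) :
    |dlt u n| = |dlt (pos u) n| + |dlt (neg u) n| := by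
  rw [dlt_add]
  exact same_sign_abs (dlt_mul_nonneg u n)

lemma abs_pow_mul_self (hpe : Even p) (hp2 : 2 ≤ p) (x : ℝ) :
    |x| ^ (p-2) * x = x ^ (p-1) := by
  have he2 : Even (p-2) := (Nat.even_sub (by omega : 2 ≤ p)).mpr (iff_of_true hpe even_two)
  rw [he2.pow_abs, ← pow_succ]
  congr 1
  omega

lemma apart_signed (hpe : Even p) (hp2 : 2 ≤ p) (γ α : ℝ) :
    |γ| ^ (p-2) * γ * α = γ ^ (p-1) * α := by
  rw [abs_pow_mul_self hpe hp2]

lemma apart_eq (hpe : Even p) (hp2 : 2 ≤ p) {α β : ℝ} (h : 0 ≤ α * β) :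
    |α + β| ^ (p-2) * (α + β) * α = |α + β| ^ (p-1) * |α| := by
  rw [mul_assoc, same_sign_mul h, ← mul_assoc, ← pow_succ]
  congr 2
  omega

lemma bpart_eq (hp2 : 2 ≤ p) (u : ℤ → ℝ) (n : ℤ) :
    |u n| ^ (p-2) * u n * pos u n = |pos u n| ^ p := by
  rcases posneg_cases u n with ⟨h, hv, hw⟩ | ⟨h, hv, hw⟩
  · rw [hv]
    exact abs_pow_self hp2 (u n)
  · rw [hv, mul_zero, abs_zero, zero_pow (by omega : p ≠ 0)]

lemma bpart_eq_neg (hp2 : 2 ≤ p) (u : ℤ → ℝ) (n : ℤ) :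
    |u n| ^ (p-2) * u n * neg u n = |neg u n| ^ p := by
  rcases posneg_cases u n with ⟨h, hv, hw⟩ | ⟨h, hv, hw⟩
  · rw [hw, mul_zero, abs_zero, zero_pow (by omega : p ≠ 0)]
  · rw [hw]
    exact abs_pow_self hp2 (u n)

lemma cpart_eq (hq0 : q ≠ 0) (hr1 : 1 ≤ r) (u : ℤ → ℝ) (n : ℤ) :
    c n * |u n| ^ (q-2) * u n * pos u n * Real.log (|u n| ^ r)
      = logSummand c q r (pos u) n := by
  rcases posneg_cases u n with ⟨h, hv, hw⟩ | ⟨h, hv, hw⟩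
  · show _ = c n * |pos u n| ^ q * Real.log (|pos u n| ^ r)
    rw [hv]
    exact c_term_self hq0 (c n) (u n)
  · show _ = c n * |pos u n| ^ q * Real.log (|pos u n| ^ r)
    rw [hv, mul_zero, zero_mul, abs_zero, Real.zero_rpow hq0, mul_zero, zero_mul]

lemma cpart_eq_neg (hq0 : q ≠ 0) (hr1 : 1 ≤ r) (u : ℤ → ℝ) (n : ℤ) :
    c n * |u n| ^ (q-2) * u n * neg u n * Real.log (|u n| ^ r)
      = logSummand c q r (neg u) n := by
  rcases posneg_cases u n with ⟨h, hv, hw⟩ | ⟨h, hv, hw⟩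
  · show _ = c n * |neg u n| ^ q * Real.log (|neg u n| ^ r)
    rw [hw, mul_zero, zero_mul, abs_zero, Real.zero_rpow hq0, mul_zero, zero_mul]
  · show _ = c n * |neg u n| ^ q * Real.log (|neg u n| ^ r)
    rw [hw]
    exact c_term_self hq0 (c n) (u n)

lemma abs_pos_le (u : ℤ → ℝ) (n : ℤ) : |pos u n| ≤ |u n| := by
  rcases posneg_cases u n with ⟨h, hv, _⟩ | ⟨h, hv, _⟩ <;> rw [hv] <;> simp [abs_nonneg]

lemma abs_neg_le (u : ℤ → ℝ) (n : ℤ) : |neg u n| ≤ |u n| := by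
  rcases posneg_cases u n with ⟨h, _, hw⟩ | ⟨h, _, hw⟩ <;> rw [hw] <;> simp [abs_nonneg]

lemma abs_dlt_pos_le (u : ℤ → ℝ) (n : ℤ) : |dlt (pos u) n| ≤ |dlt u n| := by
  rw [abs_dlt_split u n]
  linarith [abs_nonneg (dlt (neg u) n)]

lemma abs_dlt_neg_le (u : ℤ → ℝ) (n : ℤ) : |dlt (neg u) n| ≤ |dlt u n| := by
  rw [abs_dlt_split u n]
  linarith [abs_nonneg (dlt (pos u) n)]

end posneg
section part1

variable {p : ℕ} {q r : ℝ} {a b c : ℤ → ℝ} {u : ℤ → ℝ} {b0 c0 : ℝ}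

/-- All the standing hypotheses, bundled. -/
structure Hyps (p : ℕ) (q r : ℝ) (a b c : ℤ → ℝ) (b0 c0 : ℝ) : Prop where
  hp2 : 2 ≤ p
  hpe : Even p
  hpq : (p:ℝ) < q
  hr : 1 ≤ r
  ha : ∀ n, 0 < a n
  hb : ∀ n, 0 < b n
  hc : ∀ n, 0 < c n
  hb0 : 0 < b0
  hbb : ∀ n, b0 ≤ b n
  hc0 : 0 < c0
  hcc : ∀ n, c n ≤ c0
  hcsum : Summable c

variable (H : Hyps p q r a b c b0 c0)

include H in
lemma memD_cq_summable (hu : memE a b p u) :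
    Summable (fun n => c n * |u n| ^ q) := by
  obtain ⟨M, hM0, hM⟩ := abs_le_bound H.hp2 H.ha H.hb H.hb0 H.hbb hu
  exact summable_cq (hq0' H.hp2 H.hpq) H.hc H.hcsum hM0 hM

include H in
lemma smul_ne_zero' {t : ℝ} (ht : t ≠ 0) (hne : u ≠ 0) : (fun n => t * u n) ≠ 0 := by
  obtain ⟨n0, hn0⟩ := exists_ne_zero hne
  intro hcontra
  have := congrFun hcontra n0
  exact (mul_ne_zero ht hn0) this

include H in
lemma exists_nehari_scale (hu : memD a b c p q r u) (hne : u ≠ 0) :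
    ∃ t : ℝ, 0 < t ∧ (fun n => t * u n) ∈ Nset a b c p q r := by
  have hcq := memD_cq_summable H hu.1
  have hN : 0 < ∑' n, nsum a b p u n := tsum_nsum_pos H.hp2 H.ha H.hb hu.1 hne
  have hA : 0 < ∑' n, c n * |u n| ^ q := tsum_cq_pos (hq0' H.hp2 H.hpq) H.hc hcq hne
  obtain ⟨t, ht, hzero⟩ := exists_fiber_zero H.hp2 H.hpq H.hr hN hA
    (B := ∑' n, logSummand c q r u n)
  refine ⟨t, ht, memD_smul H.hp2 (hq0' H.hp2 H.hpq) H.hr ht hu hcq,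
    smul_ne_zero' H ht.ne' hne, ?_⟩
  rw [pr_self_smul H.hp2 H.hpq H.hr ht hcq hu.2]
  exact hzero

include H in
lemma fiber_bddAbove (hu : memD a b c p q r u) (hne : u ≠ 0) :
    ∃ C : ℝ, 0 ≤ C ∧
      ∀ y ∈ {y : ℝ | ∃ t : ℝ, 0 ≤ t ∧ y = En a b c p q r (fun n => t * u n)}, y ≤ C := by
  have hcq := memD_cq_summable H hu.1
  have hA : 0 < ∑' n, c n * |u n| ^ q := tsum_cq_pos (hq0' H.hp2 H.hpq) H.hc hcq hne
  obtain ⟨C, hC0, hC⟩ := Phi_bddAbove H.hp2 H.hpq H.hr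
    (K := ∑' n, nsum a b p u n) (B := ∑' n, logSummand c q r u n) hA
  refine ⟨C, hC0, ?_⟩
  rintro y ⟨t, ht, rfl⟩
  rcases eq_or_lt_of_le ht with h0 | h0
  · rw [← h0, En_zero_smul H.hp2 H.hpq u]
    exact hC0
  · rw [En_smul H.hp2 H.hpq H.hr H.ha H.hb h0 hcq hu.2]
    exact hC t ht

include H in
lemma fiber_sSup_nonneg (hu : memD a b c p q r u) (hne : u ≠ 0) :
    0 ≤ sSup {y : ℝ | ∃ t : ℝ, 0 ≤ t ∧ y = En a b c p q r (fun n => t * u n)} := by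
  obtain ⟨C, hC0, hC⟩ := fiber_bddAbove H hu hne
  have hmem : (0:ℝ) ∈ {y : ℝ | ∃ t : ℝ, 0 ≤ t ∧ y = En a b c p q r (fun n => t * u n)} :=
    ⟨0, le_refl 0, (En_zero_smul H.hp2 H.hpq u).symm⟩
  exact le_csSup ⟨C, fun y hy => hC y hy⟩ hmem

include H in
lemma En_eq_Phi_one (hu : u ∈ Nset a b c p q r) :
    En a b c p q r u
      = Phi p q r (∑' n, nsum a b p u n) (∑' n, c n * |u n| ^ q)
          (∑' n, logSummand c q r u n) 1 := by
  rw [Phi_one, En, dnorm_pow_eq H.hp2 H.ha H.hb]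

include H in
lemma tsum_nsum_eq_log (hu : u ∈ Nset a b c p q r) :
    ∑' n, nsum a b p u n = ∑' n, logSummand c q r u n := by
  have := hu.2.2
  rw [pr_self_eq H.hp2 (hq0' H.hp2 H.hpq).ne' u] at this
  linarith

include H in
lemma En_nonneg_on_Nset (hu : u ∈ Nset a b c p q r) : 0 ≤ En a b c p q r u := by
  have hq0 : 0 < q := hq0' H.hp2 H.hpq
  have hp0 : (0:ℝ) < p := hp0' H.hp2
  rw [En_eq_Phi_one H hu, Phi_one]
  have hNB := tsum_nsum_eq_log H hu
  have hN : 0 ≤ ∑' n, nsum a b p u n := tsum_nonneg (nsum_nonneg H.ha H.hb u)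
  have hA : 0 ≤ ∑' n, c n * |u n| ^ q := tsum_cq_nonneg H.hc u
  have h1 : 1/q ≤ 1/(p:ℝ) := one_div_le_one_div_of_le hp0 H.hpq.le
  have h2 : (1/q) * (∑' n, nsum a b p u n) ≤ (1/(p:ℝ)) * (∑' n, nsum a b p u n) :=
    mul_le_mul_of_nonneg_right h1 hN
  have h3 : 0 ≤ (r/q^2) * (∑' n, c n * |u n| ^ q) := by
    apply mul_nonneg _ hA
    apply div_nonneg (by linarith [H.hr]) (by positivity)
  rw [← hNB]
  linarith

include H in
lemma fiber_le_En_on_Nset (hu : u ∈ Nset a b c p q r) :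
    ∀ y ∈ {y : ℝ | ∃ t : ℝ, 0 ≤ t ∧ y = En a b c p q r (fun n => t * u n)},
      y ≤ En a b c p q r u := by
  have hq0 : 0 < q := hq0' H.hp2 H.hpq
  have hcq := memD_cq_summable H hu.1.1
  rintro y ⟨t, ht, rfl⟩
  rcases eq_or_lt_of_le ht with h0 | h0
  · rw [← h0, En_zero_smul H.hp2 H.hpq u]
    exact En_nonneg_on_Nset H hu
  · rw [En_smul H.hp2 H.hpq H.hr H.ha H.hb h0 hcq hu.1.2, En_eq_Phi_one H hu]
    exact Phi_le_Phi_one H.hp2 H.hpq H.hr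
      (tsum_nonneg (nsum_nonneg H.ha H.hb u)) (tsum_cq_nonneg H.hc u)
      (tsum_nsum_eq_log H hu) ht

/-- The delta function at a point, with value `v`. -/
def delta (n0 : ℤ) (v : ℝ) : ℤ → ℝ := fun n => if n = n0 then v else 0

include H in
lemma delta_memD (n0 : ℤ) (v : ℝ) : memD a b c p q r (delta n0 v) := by
  have hq0 : 0 < q := hq0' H.hp2 H.hpq
  have hp2 := H.hp2
  constructor
  · apply summable_of_ne_finset_zero (s := {n0 - 1, n0})
    intro n hn
    simp only [Finset.mem_insert, Finset.mem_singleton] at hn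
    push_neg at hn
    have h1 : delta n0 v n = 0 := by
      rw [delta]
      simp [hn.2]
    have h2 : delta n0 v (n + 1) = 0 := by
      rw [delta]
      have : n + 1 ≠ n0 := fun hcon => hn.1 (by omega)
      simp [this]
    show a n * |dlt (delta n0 v) n| ^ p + b n * |delta n0 v n| ^ p = 0
    rw [show dlt (delta n0 v) n = delta n0 v (n+1) - delta n0 v n from rfl, h1, h2]
    simp [zero_pow (by omega : p ≠ 0)]
  · apply summable_of_ne_finset_zero (s := {n0})
    intro n hn
    simp only [Finset.mem_singleton] at hn
    have h1 : delta n0 v n = 0 := by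
      rw [delta]
      simp [hn]
    show c n * |delta n0 v n| ^ q * Real.log (|delta n0 v n| ^ r) = 0
    rw [h1]
    simp [Real.zero_rpow hq0.ne']

lemma delta_ne_zero (n0 : ℤ) : delta n0 1 ≠ 0 := by
  intro h
  have := congrFun h n0
  rw [delta] at this
  simp at this

include H in
lemma Nset_nonempty : ∃ w, w ∈ Nset a b c p q r := by
  obtain ⟨t, ht, hN⟩ := exists_nehari_scale H (delta_memD H 0 1) (delta_ne_zero 0)
  exact ⟨_, hN⟩

include H in
lemma part1_eq :
    cStar a b c p q r
      = sInf {x : ℝ | ∃ u : ℤ → ℝ, memD a b c p q r u ∧ u ≠ 0 ∧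
          x = sSup {y : ℝ | ∃ t : ℝ, 0 ≤ t ∧
              y = En a b c p q r (fun n => t * u n)}} := by
  have himg_ne : (En a b c p q r '' Nset a b c p q r).Nonempty := by
    obtain ⟨w, hw⟩ := Nset_nonempty H
    exact ⟨_, ⟨w, hw, rfl⟩⟩
  have himg_bdd : BddBelow (En a b c p q r '' Nset a b c p q r) := by
    refine ⟨0, ?_⟩
    rintro y ⟨w, hw, rfl⟩
    exact En_nonneg_on_Nset H hw
  have hrhs_ne : {x : ℝ | ∃ u : ℤ → ℝ, memD a b c p q r u ∧ u ≠ 0 ∧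
      x = sSup {y : ℝ | ∃ t : ℝ, 0 ≤ t ∧
          y = En a b c p q r (fun n => t * u n)}}.Nonempty :=
    ⟨_, delta 0 1, delta_memD H 0 1, delta_ne_zero 0, rfl⟩
  have hrhs_bdd : BddBelow {x : ℝ | ∃ u : ℤ → ℝ, memD a b c p q r u ∧ u ≠ 0 ∧
      x = sSup {y : ℝ | ∃ t : ℝ, 0 ≤ t ∧
          y = En a b c p q r (fun n => t * u n)}} := by
    refine ⟨0, ?_⟩
    rintro x ⟨u, hu, hne, rfl⟩
    exact fiber_sSup_nonneg H hu hne
  apply le_antisymm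
  · apply le_csInf hrhs_ne
    rintro x ⟨u, hu, hne, rfl⟩
    obtain ⟨t, ht, htN⟩ := exists_nehari_scale H hu hne
    have h1 : cStar a b c p q r ≤ En a b c p q r (fun n => t * u n) :=
      csInf_le himg_bdd ⟨_, htN, rfl⟩
    obtain ⟨C, hC0, hC⟩ := fiber_bddAbove H hu hne
    have h2 : En a b c p q r (fun n => t * u n)
        ≤ sSup {y : ℝ | ∃ t' : ℝ, 0 ≤ t' ∧ y = En a b c p q r (fun n => t' * u n)} :=
      le_csSup ⟨C, fun y hy => hC y hy⟩ ⟨t, ht.le, rfl⟩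
    linarith
  · apply le_csInf himg_ne
    rintro y ⟨u, huN, rfl⟩
    have h1 : sInf {x : ℝ | ∃ u : ℤ → ℝ, memD a b c p q r u ∧ u ≠ 0 ∧
        x = sSup {y : ℝ | ∃ t : ℝ, 0 ≤ t ∧
            y = En a b c p q r (fun n => t * u n)}}
        ≤ sSup {y : ℝ | ∃ t : ℝ, 0 ≤ t ∧ y = En a b c p q r (fun n => t * u n)} :=
      csInf_le hrhs_bdd ⟨u, huN.1, huN.2.1, rfl⟩
    have h2 : sSup {y : ℝ | ∃ t : ℝ, 0 ≤ t ∧ y = En a b c p q r (fun n => t * u n)}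
        ≤ En a b c p q r u :=
      Real.sSup_le (fiber_le_En_on_Nset H huN) (En_nonneg_on_Nset H huN)
    exact le_trans h1 h2

end part1
section part2seq

variable {p : ℕ} {q r : ℝ} {a b c : ℤ → ℝ} {u : ℤ → ℝ} {b0 c0 : ℝ}

lemma pow_abs_dlt (hp2 : 2 ≤ p) (u : ℤ → ℝ) (n : ℤ) :
    |dlt u n| ^ (p-1) * |dlt u n| = |dlt u n| ^ p := by
  rw [← pow_succ]
  congr 1
  omega

lemma summable_a_dlt (hp2 : 2 ≤ p) (ha : ∀ n, 0 < a n) (hb : ∀ n, 0 < b n)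
    (hu : memE a b p u) : Summable (fun n => a n * |dlt u n| ^ p) := by
  apply Summable.of_nonneg_of_le (fun n => mul_nonneg (ha n).le (by positivity)) _ hu
  intro n
  show a n * |dlt u n| ^ p ≤ a n * |dlt u n| ^ p + b n * |u n| ^ p
  have : 0 ≤ b n * |u n| ^ p := mul_nonneg (hb n).le (by positivity)
  linarith

lemma Da_le_a_dlt (hp2 : 2 ≤ p) {v : ℤ → ℝ} (hv : ∀ n, |dlt v n| ≤ |dlt u n|) (n : ℤ) :
    |dlt u n| ^ (p-1) * |dlt v n| ≤ |dlt u n| ^ p := by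
  have h1 : |dlt u n| ^ (p-1) * |dlt v n| ≤ |dlt u n| ^ (p-1) * |dlt u n| :=
    mul_le_mul_of_nonneg_left (hv n) (by positivity)
  rw [pow_abs_dlt hp2] at h1
  exact h1

lemma summable_Da_pos (hp2 : 2 ≤ p) (ha : ∀ n, 0 < a n) (hb : ∀ n, 0 < b n)
    (hu : memE a b p u) :
    Summable (fun n => a n * (|dlt u n| ^ (p-1) * |dlt (pos u) n|)) := by
  apply Summable.of_nonneg_of_le
    (fun n => mul_nonneg (ha n).le (mul_nonneg (by positivity) (abs_nonneg _)))
    _ (summable_a_dlt hp2 ha hb hu)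
  intro n
  exact mul_le_mul_of_nonneg_left (Da_le_a_dlt hp2 (abs_dlt_pos_le u) n) (ha n).le

lemma summable_Da_neg (hp2 : 2 ≤ p) (ha : ∀ n, 0 < a n) (hb : ∀ n, 0 < b n)
    (hu : memE a b p u) :
    Summable (fun n => a n * (|dlt u n| ^ (p-1) * |dlt (neg u) n|)) := by
  apply Summable.of_nonneg_of_le
    (fun n => mul_nonneg (ha n).le (mul_nonneg (by positivity) (abs_nonneg _)))
    _ (summable_a_dlt hp2 ha hb hu)
  intro n
  exact mul_le_mul_of_nonneg_left (Da_le_a_dlt hp2 (abs_dlt_neg_le u) n) (ha n).le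

lemma nsum_pos_le (hp2 : 2 ≤ p) (ha : ∀ n, 0 < a n) (hb : ∀ n, 0 < b n) (u : ℤ → ℝ) (n : ℤ) :
    nsum a b p (pos u) n ≤ nsum a b p u n := by
  show a n * |dlt (pos u) n| ^ p + b n * |pos u n| ^ p
    ≤ a n * |dlt u n| ^ p + b n * |u n| ^ p
  have h1 : |dlt (pos u) n| ^ p ≤ |dlt u n| ^ p :=
    pow_le_pow_left₀ (abs_nonneg _) (abs_dlt_pos_le u n) p
  have h2 : |pos u n| ^ p ≤ |u n| ^ p :=
    pow_le_pow_left₀ (abs_nonneg _) (abs_pos_le u n) p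
  have := mul_le_mul_of_nonneg_left h1 (ha n).le
  have := mul_le_mul_of_nonneg_left h2 (hb n).le
  linarith

lemma nsum_neg_le (hp2 : 2 ≤ p) (ha : ∀ n, 0 < a n) (hb : ∀ n, 0 < b n) (u : ℤ → ℝ) (n : ℤ) :
    nsum a b p (neg u) n ≤ nsum a b p u n := by
  show a n * |dlt (neg u) n| ^ p + b n * |neg u n| ^ p
    ≤ a n * |dlt u n| ^ p + b n * |u n| ^ p
  have h1 : |dlt (neg u) n| ^ p ≤ |dlt u n| ^ p :=
    pow_le_pow_left₀ (abs_nonneg _) (abs_dlt_neg_le u n) p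
  have h2 : |neg u n| ^ p ≤ |u n| ^ p :=
    pow_le_pow_left₀ (abs_nonneg _) (abs_neg_le u n) p
  have := mul_le_mul_of_nonneg_left h1 (ha n).le
  have := mul_le_mul_of_nonneg_left h2 (hb n).le
  linarith

lemma memE_pos (hp2 : 2 ≤ p) (ha : ∀ n, 0 < a n) (hb : ∀ n, 0 < b n)
    (hu : memE a b p u) : memE a b p (pos u) :=
  Summable.of_nonneg_of_le (nsum_nonneg ha hb (pos u)) (nsum_pos_le hp2 ha hb u) hu

lemma memE_neg (hp2 : 2 ≤ p) (ha : ∀ n, 0 < a n) (hb : ∀ n, 0 < b n)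
    (hu : memE a b p u) : memE a b p (neg u) :=
  Summable.of_nonneg_of_le (nsum_nonneg ha hb (neg u)) (nsum_neg_le hp2 ha hb u) hu

lemma summable_b_pos (hp2 : 2 ≤ p) (ha : ∀ n, 0 < a n) (hb : ∀ n, 0 < b n)
    (hu : memE a b p u) : Summable (fun n => b n * |pos u n| ^ p) :=
  summable_b_abs ha hb (memE_pos hp2 ha hb hu)

lemma summable_b_neg (hp2 : 2 ≤ p) (ha : ∀ n, 0 < a n) (hb : ∀ n, 0 < b n)
    (hu : memE a b p u) : Summable (fun n => b n * |neg u n| ^ p) :=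
  summable_b_abs ha hb (memE_neg hp2 ha hb hu)

lemma logSummand_pos_cases (hq0 : q ≠ 0) (u : ℤ → ℝ) (n : ℤ) :
    logSummand c q r (pos u) n = (if 0 ≤ u n then logSummand c q r u n else 0) := by
  rcases posneg_cases u n with ⟨h, hv, _⟩ | ⟨h, hv, _⟩
  · rw [if_pos h]
    show c n * |pos u n| ^ q * Real.log (|pos u n| ^ r) = _
    rw [hv]
    rfl
  · rw [if_neg (not_le.mpr h)]
    show c n * |pos u n| ^ q * Real.log (|pos u n| ^ r) = 0
    rw [hv, abs_zero, Real.zero_rpow hq0]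
    ring

lemma logSummand_neg_cases (hq0 : q ≠ 0) (u : ℤ → ℝ) (n : ℤ) :
    logSummand c q r (neg u) n = (if 0 ≤ u n then 0 else logSummand c q r u n) := by
  rcases posneg_cases u n with ⟨h, _, hw⟩ | ⟨h, _, hw⟩
  · rw [if_pos h]
    show c n * |neg u n| ^ q * Real.log (|neg u n| ^ r) = 0
    rw [hw, abs_zero, Real.zero_rpow hq0]
    ring
  · rw [if_neg (not_le.mpr h)]
    show c n * |neg u n| ^ q * Real.log (|neg u n| ^ r) = _
    rw [hw]
    rfl

lemma summable_log_pos (hq0 : q ≠ 0) (hu2 : Summable (logSummand c q r u)) :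
    Summable (logSummand c q r (pos u)) := by
  rw [← summable_abs_iff]
  apply Summable.of_nonneg_of_le (fun n => abs_nonneg _) _ (summable_abs_iff.mpr hu2)
  intro n
  rw [logSummand_pos_cases hq0]
  split
  · exact le_refl _
  · simp [abs_nonneg]

lemma summable_log_neg (hq0 : q ≠ 0) (hu2 : Summable (logSummand c q r u)) :
    Summable (logSummand c q r (neg u)) := by
  rw [← summable_abs_iff]
  apply Summable.of_nonneg_of_le (fun n => abs_nonneg _) _ (summable_abs_iff.mpr hu2)
  intro n
  rw [logSummand_neg_cases hq0]
  split
  · simp [abs_nonneg]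
  · exact le_refl _

lemma summable_cq_pos (hq0 : 0 < q) (hc : ∀ n, 0 < c n)
    (hsum : Summable (fun n => c n * |u n| ^ q)) :
    Summable (fun n => c n * |pos u n| ^ q) := by
  apply Summable.of_nonneg_of_le
    (fun n => mul_nonneg (hc n).le (Real.rpow_nonneg (abs_nonneg _) q)) _ hsum
  intro n
  exact mul_le_mul_of_nonneg_left
    (Real.rpow_le_rpow (abs_nonneg _) (abs_pos_le u n) hq0.le) (hc n).le

lemma summable_cq_neg (hq0 : 0 < q) (hc : ∀ n, 0 < c n)
    (hsum : Summable (fun n => c n * |u n| ^ q)) :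
    Summable (fun n => c n * |neg u n| ^ q) := by
  apply Summable.of_nonneg_of_le
    (fun n => mul_nonneg (hc n).le (Real.rpow_nonneg (abs_nonneg _) q)) _ hsum
  intro n
  exact mul_le_mul_of_nonneg_left
    (Real.rpow_le_rpow (abs_nonneg _) (abs_neg_le u n) hq0.le) (hc n).le

/-! tsum splittings -/

lemma b_split (hp2 : 2 ≤ p) (u : ℤ → ℝ) (n : ℤ) :
    b n * |u n| ^ p = b n * |pos u n| ^ p + b n * |neg u n| ^ p := by
  rcases posneg_cases u n with ⟨h, hv, hw⟩ | ⟨h, hv, hw⟩ <;> rw [hv, hw]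
  · rw [abs_zero, zero_pow (by omega : p ≠ 0), mul_zero, add_zero]
  · rw [abs_zero, zero_pow (by omega : p ≠ 0), mul_zero, zero_add]

lemma tsum_b_split (hp2 : 2 ≤ p) (hq0 : 0 < q) (ha : ∀ n, 0 < a n) (hb : ∀ n, 0 < b n)
    (hu : memE a b p u) :
    ∑' n, b n * |u n| ^ p
      = (∑' n, b n * |pos u n| ^ p) + ∑' n, b n * |neg u n| ^ p := by
  rw [← Summable.tsum_add (summable_b_pos hp2 ha hb hu) (summable_b_neg hp2 ha hb hu)]
  exact tsum_congr (fun n => b_split hp2 u n)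

lemma a_split (hp2 : 2 ≤ p) (u : ℤ → ℝ) (n : ℤ) :
    a n * |dlt u n| ^ p
      = a n * (|dlt u n| ^ (p-1) * |dlt (pos u) n|)
        + a n * (|dlt u n| ^ (p-1) * |dlt (neg u) n|) := by
  rw [← mul_add, ← mul_add, abs_dlt_split u n]
  rw [show (|dlt (pos u) n| + |dlt (neg u) n|) ^ p
      = (|dlt (pos u) n| + |dlt (neg u) n|) ^ (p-1)
        * (|dlt (pos u) n| + |dlt (neg u) n|) by rw [← pow_succ]; congr 1; omega]

lemma tsum_a_split (hp2 : 2 ≤ p) (ha : ∀ n, 0 < a n) (hb : ∀ n, 0 < b n)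
    (hu : memE a b p u) :
    ∑' n, a n * |dlt u n| ^ p
      = (∑' n, a n * (|dlt u n| ^ (p-1) * |dlt (pos u) n|))
        + ∑' n, a n * (|dlt u n| ^ (p-1) * |dlt (neg u) n|) := by
  rw [← Summable.tsum_add (summable_Da_pos hp2 ha hb hu) (summable_Da_neg hp2 ha hb hu)]
  exact tsum_congr (fun n => a_split hp2 u n)

lemma tsum_nsum_split (hp2 : 2 ≤ p) (ha : ∀ n, 0 < a n) (hb : ∀ n, 0 < b n)
    (hu : memE a b p u) :
    ∑' n, nsum a b p u n
      = (∑' n, a n * |dlt u n| ^ p) + ∑' n, b n * |u n| ^ p := by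
  rw [← Summable.tsum_add (summable_a_dlt hp2 ha hb hu) (summable_b_abs ha hb hu)]
  rfl

lemma cq_split (hq0 : 0 < q) (u : ℤ → ℝ) (n : ℤ) :
    c n * |u n| ^ q = c n * |pos u n| ^ q + c n * |neg u n| ^ q := by
  rcases posneg_cases u n with ⟨h, hv, hw⟩ | ⟨h, hv, hw⟩ <;> rw [hv, hw] <;>
    simp [abs_zero, Real.zero_rpow hq0.ne']

lemma tsum_cq_split (hq0 : 0 < q) (hc : ∀ n, 0 < c n)
    (hsum : Summable (fun n => c n * |u n| ^ q)) :
    ∑' n, c n * |u n| ^ q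
      = (∑' n, c n * |pos u n| ^ q) + ∑' n, c n * |neg u n| ^ q := by
  rw [← Summable.tsum_add (summable_cq_pos hq0 hc hsum) (summable_cq_neg hq0 hc hsum)]
  exact tsum_congr (fun n => cq_split hq0 u n)

lemma log_split (hq0 : q ≠ 0) (u : ℤ → ℝ) (n : ℤ) :
    logSummand c q r u n = logSummand c q r (pos u) n + logSummand c q r (neg u) n := by
  rw [logSummand_pos_cases hq0, logSummand_neg_cases hq0]
  split <;> ring

lemma tsum_log_split (hq0 : q ≠ 0) (hu2 : Summable (logSummand c q r u)) :
    ∑' n, logSummand c q r u n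
      = (∑' n, logSummand c q r (pos u) n) + ∑' n, logSummand c q r (neg u) n := by
  rw [← Summable.tsum_add (summable_log_pos hq0 hu2) (summable_log_neg hq0 hu2)]
  exact tsum_congr (fun n => log_split hq0 u n)

/-! The pairing against `pos u` and `neg u`. -/

lemma pr_pos_eq (hpe : Even p) (hp2 : 2 ≤ p) (hq0 : q ≠ 0) (hr1 : 1 ≤ r)
    (ha : ∀ n, 0 < a n) (hb : ∀ n, 0 < b n) (hu : memE a b p u) :
    pr a b c p q r u (pos u)
      = ((∑' n, a n * (|dlt u n| ^ (p-1) * |dlt (pos u) n|))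
          + ∑' n, b n * |pos u n| ^ p)
        - ∑' n, logSummand c q r (pos u) n := by
  rw [pr]
  congr 1
  · rw [← Summable.tsum_add (summable_Da_pos hp2 ha hb hu) (summable_b_pos hp2 ha hb hu)]
    apply tsum_congr
    intro n
    rw [dlt_add u n]
    rw [show a n * |dlt (pos u) n + dlt (neg u) n| ^ (p-2)
          * (dlt (pos u) n + dlt (neg u) n) * dlt (pos u) n
        = a n * (|dlt (pos u) n + dlt (neg u) n| ^ (p-2)
          * (dlt (pos u) n + dlt (neg u) n) * dlt (pos u) n) by ring,
      apart_eq hpe hp2 (dlt_mul_nonneg u n)]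
    rw [show b n * |u n| ^ (p-2) * u n * pos u n
        = b n * (|u n| ^ (p-2) * u n * pos u n) by ring, bpart_eq hp2 u n]
  · exact tsum_congr (fun n => cpart_eq hq0 hr1 u n)

lemma pr_neg_eq (hpe : Even p) (hp2 : 2 ≤ p) (hq0 : q ≠ 0) (hr1 : 1 ≤ r)
    (ha : ∀ n, 0 < a n) (hb : ∀ n, 0 < b n) (hu : memE a b p u) :
    pr a b c p q r u (neg u)
      = ((∑' n, a n * (|dlt u n| ^ (p-1) * |dlt (neg u) n|))
          + ∑' n, b n * |neg u n| ^ p)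
        - ∑' n, logSummand c q r (neg u) n := by
  rw [pr]
  congr 1
  · rw [← Summable.tsum_add (summable_Da_neg hp2 ha hb hu) (summable_b_neg hp2 ha hb hu)]
    apply tsum_congr
    intro n
    rw [dlt_add u n]
    have hcomm : 0 ≤ dlt (neg u) n * dlt (pos u) n := by
      rw [mul_comm]; exact dlt_mul_nonneg u n
    have key := apart_eq hpe hp2 hcomm
    rw [add_comm (dlt (neg u) n) (dlt (pos u) n)] at key
    rw [show a n * |dlt (pos u) n + dlt (neg u) n| ^ (p-2)
          * (dlt (pos u) n + dlt (neg u) n) * dlt (neg u) n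
        = a n * (|dlt (pos u) n + dlt (neg u) n| ^ (p-2)
          * (dlt (pos u) n + dlt (neg u) n) * dlt (neg u) n) by ring,
      key]
    rw [show b n * |u n| ^ (p-2) * u n * neg u n
        = b n * (|u n| ^ (p-2) * u n * neg u n) by ring, bpart_eq_neg hp2 u n]
  · exact tsum_congr (fun n => cpart_eq_neg hq0 hr1 u n)

lemma En_split_one (hpe : Even p) (hp2 : 2 ≤ p) (hpq : (p:ℝ) < q) (hr1 : 1 ≤ r)
    (ha : ∀ n, 0 < a n) (hb : ∀ n, 0 < b n) (hc : ∀ n, 0 < c n)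
    (hu : memE a b p u) (hu2 : Summable (logSummand c q r u))
    (hcq : Summable (fun n => c n * |u n| ^ q)) :
    En a b c p q r u
      = Phi p q r
          ((∑' n, a n * (|dlt u n| ^ (p-1) * |dlt (pos u) n|)) + ∑' n, b n * |pos u n| ^ p)
          (∑' n, c n * |pos u n| ^ q) (∑' n, logSummand c q r (pos u) n) 1
        + Phi p q r
          ((∑' n, a n * (|dlt u n| ^ (p-1) * |dlt (neg u) n|)) + ∑' n, b n * |neg u n| ^ p)
          (∑' n, c n * |neg u n| ^ q) (∑' n, logSummand c q r (neg u) n) 1 := by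
  have hq0 : 0 < q := hq0' hp2 hpq
  rw [Phi_one, Phi_one, En, dnorm_pow_eq hp2 ha hb, tsum_nsum_split hp2 ha hb hu,
    tsum_a_split hp2 ha hb hu, tsum_b_split hp2 hq0 ha hb hu,
    tsum_cq_split hq0 hc hcq, tsum_log_split hq0.ne' hu2]
  ring

end part2seq
section zlem

variable {p : ℕ} {q r : ℝ} {a b c : ℤ → ℝ} {u : ℤ → ℝ} {s t : ℝ}

lemma abs_posneg_split (u : ℤ → ℝ) (n : ℤ) : |pos u n| + |neg u n| = |u n| := by
  rcases posneg_cases u n with ⟨h, hv, hw⟩ | ⟨h, hv, hw⟩ <;> rw [hv, hw] <;> simp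

lemma pos_z (hs : 0 ≤ s) (ht : 0 ≤ t) (u : ℤ → ℝ) :
    pos (fun n => s * pos u n + t * neg u n) = fun n => s * pos u n := by
  funext n
  show max (s * pos u n + t * neg u n) 0 = s * pos u n
  rcases posneg_cases u n with ⟨h, hv, hw⟩ | ⟨h, hv, hw⟩
  · rw [hw, mul_zero, add_zero]
    exact max_eq_left (mul_nonneg hs (pos_nonneg' u n))
  · rw [hv, mul_zero, zero_add]
    exact max_eq_right (mul_nonpos_of_nonneg_of_nonpos ht (neg_nonpos' u n))

lemma neg_z (hs : 0 ≤ s) (ht : 0 ≤ t) (u : ℤ → ℝ) :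
    neg (fun n => s * pos u n + t * neg u n) = fun n => t * neg u n := by
  funext n
  show min (s * pos u n + t * neg u n) 0 = t * neg u n
  rcases posneg_cases u n with ⟨h, hv, hw⟩ | ⟨h, hv, hw⟩
  · rw [hw, mul_zero, add_zero]
    exact min_eq_right (mul_nonneg hs (pos_nonneg' u n))
  · rw [hv, mul_zero, zero_add]
    exact min_eq_left (mul_nonpos_of_nonneg_of_nonpos ht (neg_nonpos' u n))

lemma dlt_z (u : ℤ → ℝ) (n : ℤ) :
    dlt (fun n => s * pos u n + t * neg u n) n
      = s * dlt (pos u) n + t * dlt (neg u) n := by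
  show s * pos u (n+1) + t * neg u (n+1) - (s * pos u n + t * neg u n)
    = s * (pos u (n+1) - pos u n) + t * (neg u (n+1) - neg u n)
  ring

lemma abs_dlt_z (hs : 0 ≤ s) (ht : 0 ≤ t) (u : ℤ → ℝ) (n : ℤ) :
    |dlt (fun n => s * pos u n + t * neg u n) n|
      = s * |dlt (pos u) n| + t * |dlt (neg u) n| := by
  rw [dlt_z]
  have hprod : 0 ≤ (s * dlt (pos u) n) * (t * dlt (neg u) n) := by
    have := dlt_mul_nonneg u n
    have : 0 ≤ s * t * (dlt (pos u) n * dlt (neg u) n) :=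
      mul_nonneg (mul_nonneg hs ht) this
    nlinarith
  rw [same_sign_abs hprod, abs_mul, abs_mul, abs_of_nonneg hs, abs_of_nonneg ht]

lemma abs_z_le (hs : 0 ≤ s) (ht : 0 ≤ t) (u : ℤ → ℝ) (n : ℤ) :
    |s * pos u n + t * neg u n| ≤ (s + t) * |u n| := by
  calc |s * pos u n + t * neg u n| ≤ |s * pos u n| + |t * neg u n| := abs_add_le _ _
    _ = s * |pos u n| + t * |neg u n| := by
        rw [abs_mul, abs_mul, abs_of_nonneg hs, abs_of_nonneg ht]
    _ ≤ (s + t) * |pos u n| + (s + t) * |neg u n| := by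
        have h1 : s * |pos u n| ≤ (s+t) * |pos u n| :=
          mul_le_mul_of_nonneg_right (by linarith) (abs_nonneg _)
        have h2 : t * |neg u n| ≤ (s+t) * |neg u n| :=
          mul_le_mul_of_nonneg_right (by linarith) (abs_nonneg _)
        linarith
    _ = (s + t) * |u n| := by rw [← mul_add, abs_posneg_split]

lemma abs_dlt_z_le (hs : 0 ≤ s) (ht : 0 ≤ t) (u : ℤ → ℝ) (n : ℤ) :
    |dlt (fun n => s * pos u n + t * neg u n) n| ≤ (s + t) * |dlt u n| := by
  rw [abs_dlt_z hs ht]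
  have h1 : s * |dlt (pos u) n| ≤ (s+t) * |dlt (pos u) n| :=
    mul_le_mul_of_nonneg_right (by linarith) (abs_nonneg _)
  have h2 : t * |dlt (neg u) n| ≤ (s+t) * |dlt (neg u) n| :=
    mul_le_mul_of_nonneg_right (by linarith) (abs_nonneg _)
  have h3 : (s+t) * |dlt (pos u) n| + (s+t) * |dlt (neg u) n| = (s+t) * |dlt u n| := by
    rw [← mul_add, ← abs_dlt_split u n]
  linarith

lemma memE_z (hp2 : 2 ≤ p) (ha : ∀ n, 0 < a n) (hb : ∀ n, 0 < b n)
    (hs : 0 ≤ s) (ht : 0 ≤ t) (hu : memE a b p u) :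
    memE a b p (fun n => s * pos u n + t * neg u n) := by
  show Summable (nsum a b p (fun n => s * pos u n + t * neg u n))
  apply Summable.of_nonneg_of_le (nsum_nonneg ha hb _) _ (hu.mul_left ((s+t)^p))
  intro n
  show a n * |dlt (fun n => s * pos u n + t * neg u n) n| ^ p
      + b n * |s * pos u n + t * neg u n| ^ p
    ≤ (s+t)^p * (a n * |dlt u n| ^ p + b n * |u n| ^ p)
  have h1 : |dlt (fun n => s * pos u n + t * neg u n) n| ^ p ≤ ((s+t) * |dlt u n|) ^ p :=
    pow_le_pow_left₀ (abs_nonneg _) (abs_dlt_z_le hs ht u n) p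
  have h2 : |s * pos u n + t * neg u n| ^ p ≤ ((s+t) * |u n|) ^ p :=
    pow_le_pow_left₀ (abs_nonneg _) (abs_z_le hs ht u n) p
  rw [mul_pow] at h1 h2
  have h3 := mul_le_mul_of_nonneg_left h1 (ha n).le
  have h4 := mul_le_mul_of_nonneg_left h2 (hb n).le
  nlinarith [h3, h4]

lemma bz_split (hp2 : 2 ≤ p) (hs : 0 ≤ s) (ht : 0 ≤ t) (u : ℤ → ℝ) (n : ℤ) :
    b n * |s * pos u n + t * neg u n| ^ p
      = s^p * (b n * |pos u n| ^ p) + t^p * (b n * |neg u n| ^ p) := by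
  rcases posneg_cases u n with ⟨h, hv, hw⟩ | ⟨h, hv, hw⟩
  · rw [hw, mul_zero, add_zero, abs_mul, abs_of_nonneg hs, mul_pow, abs_zero,
      zero_pow (by omega : p ≠ 0)]
    ring
  · rw [hv, mul_zero, zero_add, abs_mul, abs_of_nonneg ht, mul_pow, abs_zero,
      zero_pow (by omega : p ≠ 0)]
    ring

lemma cz_split (hq0 : 0 < q) (hs : 0 ≤ s) (ht : 0 ≤ t) (u : ℤ → ℝ) (n : ℤ) :
    c n * |s * pos u n + t * neg u n| ^ q
      = s^q * (c n * |pos u n| ^ q) + t^q * (c n * |neg u n| ^ q) := by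
  rcases posneg_cases u n with ⟨h, hv, hw⟩ | ⟨h, hv, hw⟩
  · rw [hw, mul_zero, add_zero, abs_mul, abs_of_nonneg hs,
      Real.mul_rpow hs (abs_nonneg _), abs_zero, Real.zero_rpow hq0.ne']
    ring
  · rw [hv, mul_zero, zero_add, abs_mul, abs_of_nonneg ht,
      Real.mul_rpow ht (abs_nonneg _), abs_zero, Real.zero_rpow hq0.ne']
    ring

lemma logz_split (hq0 : 0 < q) (u : ℤ → ℝ) (n : ℤ) :
    logSummand c q r (fun n => s * pos u n + t * neg u n) n
      = logSummand c q r (fun n => s * pos u n) n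
        + logSummand c q r (fun n => t * neg u n) n := by
  rcases posneg_cases u n with ⟨h, hv, hw⟩ | ⟨h, hv, hw⟩
  · show c n * |s * pos u n + t * neg u n| ^ q
        * Real.log (|s * pos u n + t * neg u n| ^ r)
      = c n * |s * pos u n| ^ q * Real.log (|s * pos u n| ^ r)
        + c n * |t * neg u n| ^ q * Real.log (|t * neg u n| ^ r)
    rw [hw, mul_zero, add_zero, abs_zero, Real.zero_rpow hq0.ne']
    simp
  · show c n * |s * pos u n + t * neg u n| ^ q
        * Real.log (|s * pos u n + t * neg u n| ^ r)
      = c n * |s * pos u n| ^ q * Real.log (|s * pos u n| ^ r)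
        + c n * |t * neg u n| ^ q * Real.log (|t * neg u n| ^ r)
    rw [hv, mul_zero, zero_add, abs_zero, Real.zero_rpow hq0.ne']
    simp

lemma summable_log_z (hq0 : 0 < q) (hr1 : 1 ≤ r) (hs : 0 < s) (ht : 0 < t)
    (hc : ∀ n, 0 < c n)
    (hcqv : Summable (fun n => c n * |pos u n| ^ q))
    (hcqw : Summable (fun n => c n * |neg u n| ^ q))
    (hlogv : Summable (logSummand c q r (pos u)))
    (hlogw : Summable (logSummand c q r (neg u))) :
    Summable (logSummand c q r (fun n => s * pos u n + t * neg u n)) := by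
  apply Summable.congr (f := fun n => logSummand c q r (fun n => s * pos u n) n
    + logSummand c q r (fun n => t * neg u n) n)
  · exact (summable_logSummand_smul hq0 hr1 hs hcqv hlogv).add
      (summable_logSummand_smul hq0 hr1 ht hcqw hlogw)
  · exact fun n => (logz_split hq0 u n).symm

lemma tsum_log_z (hq0 : 0 < q) (hr1 : 1 ≤ r) (hs : 0 < s) (ht : 0 < t)
    (hcqv : Summable (fun n => c n * |pos u n| ^ q))
    (hcqw : Summable (fun n => c n * |neg u n| ^ q))
    (hlogv : Summable (logSummand c q r (pos u)))
    (hlogw : Summable (logSummand c q r (neg u))) :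
    ∑' n, logSummand c q r (fun n => s * pos u n + t * neg u n) n
      = s^q * (r * Real.log s * (∑' n, c n * |pos u n| ^ q)
          + ∑' n, logSummand c q r (pos u) n)
        + t^q * (r * Real.log t * (∑' n, c n * |neg u n| ^ q)
          + ∑' n, logSummand c q r (neg u) n) := by
  rw [← tsum_logSummand_smul hq0 hr1 hs hcqv hlogv,
    ← tsum_logSummand_smul hq0 hr1 ht hcqw hlogw]
  rw [← Summable.tsum_add (summable_logSummand_smul hq0 hr1 hs hcqv hlogv)
    (summable_logSummand_smul hq0 hr1 ht hcqw hlogw)]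
  exact tsum_congr (fun n => logz_split hq0 u n)

lemma memD_z (hp2 : 2 ≤ p) (hpq : (p:ℝ) < q) (hr1 : 1 ≤ r)
    (ha : ∀ n, 0 < a n) (hb : ∀ n, 0 < b n) (hc : ∀ n, 0 < c n)
    (hs : 0 < s) (ht : 0 < t) (hu : memD a b c p q r u)
    (hcq : Summable (fun n => c n * |u n| ^ q)) :
    memD a b c p q r (fun n => s * pos u n + t * neg u n) := by
  have hq0 : 0 < q := hq0' hp2 hpq
  exact ⟨memE_z hp2 ha hb hs.le ht.le hu.1,
    summable_log_z hq0 hr1 hs ht hc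
      (summable_cq_pos hq0 hc hcq) (summable_cq_neg hq0 hc hcq)
      (summable_log_pos hq0.ne' hu.2) (summable_log_neg hq0.ne' hu.2)⟩

lemma summable_az (hp2 : 2 ≤ p) (ha : ∀ n, 0 < a n) (hb : ∀ n, 0 < b n)
    (hs : 0 ≤ s) (ht : 0 ≤ t) (hu : memE a b p u) :
    Summable (fun n =>
      a n * |dlt (fun n => s * pos u n + t * neg u n) n| ^ p) :=
  summable_a_dlt hp2 ha hb (memE_z hp2 ha hb hs ht hu)

lemma summable_bz (hp2 : 2 ≤ p) (ha : ∀ n, 0 < a n) (hb : ∀ n, 0 < b n)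
    (hs : 0 ≤ s) (ht : 0 ≤ t) (hu : memE a b p u) :
    Summable (fun n => b n * |s * pos u n + t * neg u n| ^ p) := by
  have := summable_b_abs ha hb (memE_z hp2 ha hb hs ht hu)
  exact this

lemma tsum_bz (hp2 : 2 ≤ p) (ha : ∀ n, 0 < a n) (hb : ∀ n, 0 < b n)
    (hs : 0 ≤ s) (ht : 0 ≤ t) (hu : memE a b p u) :
    ∑' n, b n * |s * pos u n + t * neg u n| ^ p
      = s^p * (∑' n, b n * |pos u n| ^ p) + t^p * (∑' n, b n * |neg u n| ^ p) := by
  rw [← tsum_mul_left, ← tsum_mul_left,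
    ← Summable.tsum_add ((summable_b_pos hp2 ha hb hu).mul_left _)
      ((summable_b_neg hp2 ha hb hu).mul_left _)]
  exact tsum_congr (fun n => bz_split hp2 hs ht u n)

lemma tsum_cz (hp2 : 2 ≤ p) (hq0 : 0 < q) (hc : ∀ n, 0 < c n)
    (hs : 0 ≤ s) (ht : 0 ≤ t) (hcq : Summable (fun n => c n * |u n| ^ q)) :
    ∑' n, c n * |s * pos u n + t * neg u n| ^ q
      = s^q * (∑' n, c n * |pos u n| ^ q) + t^q * (∑' n, c n * |neg u n| ^ q) := by
  rw [← tsum_mul_left, ← tsum_mul_left,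
    ← Summable.tsum_add ((summable_cq_pos hq0 hc hcq).mul_left _)
      ((summable_cq_neg hq0 hc hcq).mul_left _)]
  exact tsum_congr (fun n => cz_split hq0 hs ht u n)

lemma En_z_eq (hpe : Even p) (hp2 : 2 ≤ p) (hpq : (p:ℝ) < q) (hr1 : 1 ≤ r)
    (ha : ∀ n, 0 < a n) (hb : ∀ n, 0 < b n) (hc : ∀ n, 0 < c n)
    (hs : 0 < s) (ht : 0 < t) (hu : memD a b c p q r u)
    (hcq : Summable (fun n => c n * |u n| ^ q)) :
    En a b c p q r (fun n => s * pos u n + t * neg u n)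
      = (1/(p:ℝ)) * (∑' n, a n * |dlt (fun n => s * pos u n + t * neg u n) n| ^ p)
        + Phi p q r (∑' n, b n * |pos u n| ^ p) (∑' n, c n * |pos u n| ^ q)
            (∑' n, logSummand c q r (pos u) n) s
        + Phi p q r (∑' n, b n * |neg u n| ^ p) (∑' n, c n * |neg u n| ^ q)
            (∑' n, logSummand c q r (neg u) n) t := by
  have hq0 : 0 < q := hq0' hp2 hpq
  rw [En, dnorm_pow_eq hp2 ha hb,
    tsum_nsum_split hp2 ha hb (memE_z hp2 ha hb hs.le ht.le hu.1),
    tsum_bz hp2 ha hb hs.le ht.le hu.1, tsum_cz hp2 hq0 hc hs.le ht.le hcq,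
    tsum_log_z hq0 hr1 hs ht (summable_cq_pos hq0 hc hcq) (summable_cq_neg hq0 hc hcq)
      (summable_log_pos hq0.ne' hu.2) (summable_log_neg hq0.ne' hu.2),
    Phi, Phi]
  ring

lemma tsum_az_le (hpe : Even p) (hp2 : 2 ≤ p) (ha : ∀ n, 0 < a n) (hb : ∀ n, 0 < b n)
    (hs : 0 ≤ s) (ht : 0 ≤ t) (hu : memE a b p u) :
    ∑' n, a n * |dlt (fun n => s * pos u n + t * neg u n) n| ^ p
      ≤ s^p * (∑' n, a n * (|dlt u n| ^ (p-1) * |dlt (pos u) n|))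
        + t^p * (∑' n, a n * (|dlt u n| ^ (p-1) * |dlt (neg u) n|)) := by
  rw [← tsum_mul_left, ← tsum_mul_left,
    ← Summable.tsum_add ((summable_Da_pos hp2 ha hb hu).mul_left _)
      ((summable_Da_neg hp2 ha hb hu).mul_left _)]
  apply Summable.tsum_le_tsum _ (summable_az hp2 ha hb hs ht hu)
    (((summable_Da_pos hp2 ha hb hu).mul_left _).add
      ((summable_Da_neg hp2 ha hb hu).mul_left _))
  intro n
  rw [abs_dlt_z hs ht]
  have key := convex_split hpe hp2 (abs_nonneg (dlt (pos u) n)) (abs_nonneg (dlt (neg u) n))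
    hs ht
  have h2 : (|dlt (pos u) n| + |dlt (neg u) n|) ^ (p-1)
      * (s^p * |dlt (pos u) n| + t^p * |dlt (neg u) n|)
      = |dlt u n| ^ (p-1) * (s^p * |dlt (pos u) n| + t^p * |dlt (neg u) n|) := by
    rw [abs_dlt_split u n]
  have h3 := mul_le_mul_of_nonneg_left (le_trans key (le_of_eq h2)) (ha n).le
  have h4 : (s * |dlt (pos u) n| + t * |dlt (neg u) n|) ^ p
      ≤ |dlt u n| ^ (p-1) * (s^p * |dlt (pos u) n| + t^p * |dlt (neg u) n|) :=
    le_trans key (le_of_eq h2)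
  calc a n * (s * |dlt (pos u) n| + t * |dlt (neg u) n|) ^ p
      ≤ a n * (|dlt u n| ^ (p-1) * (s^p * |dlt (pos u) n| + t^p * |dlt (neg u) n|)) :=
        mul_le_mul_of_nonneg_left h4 (ha n).le
    _ = s^p * (a n * (|dlt u n| ^ (p-1) * |dlt (pos u) n|))
        + t^p * (a n * (|dlt u n| ^ (p-1) * |dlt (neg u) n|)) := by ring

end zlem
section przlem

variable {p : ℕ} {q r : ℝ} {a b c : ℤ → ℝ} {u : ℤ → ℝ} {s t : ℝ}

lemma summable_Fa_pos (hp2 : 2 ≤ p) (ha : ∀ n, 0 < a n) (hb : ∀ n, 0 < b n)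
    (hs : 0 ≤ s) (ht : 0 ≤ t) (hu : memE a b p u) :
    Summable (fun n =>
      a n * (dlt (fun n => s * pos u n + t * neg u n) n ^ (p-1) * dlt (pos u) n)) := by
  rw [← summable_abs_iff]
  apply Summable.of_nonneg_of_le (fun n => abs_nonneg _)
    _ ((summable_a_dlt hp2 ha hb hu).mul_left ((s+t)^(p-1)))
  intro n
  set X := dlt (fun n => s * pos u n + t * neg u n) n with hX
  have e1 : |a n * (X ^ (p-1) * dlt (pos u) n)| = a n * (|X| ^ (p-1) * |dlt (pos u) n|) := by
    rw [abs_mul, abs_mul, abs_pow, abs_of_nonneg (ha n).le]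
  rw [e1]
  have h1 : |X| ^ (p-1) ≤ ((s+t) * |dlt u n|) ^ (p-1) :=
    pow_le_pow_left₀ (abs_nonneg _) (abs_dlt_z_le hs ht u n) _
  have h2 : |X| ^ (p-1) * |dlt (pos u) n| ≤ ((s+t) * |dlt u n|) ^ (p-1) * |dlt u n| := by
    apply mul_le_mul h1 (abs_dlt_pos_le u n) (abs_nonneg _) (by positivity)
  have h3 : ((s+t) * |dlt u n|) ^ (p-1) * |dlt u n| = (s+t)^(p-1) * |dlt u n| ^ p := by
    rw [mul_pow, mul_assoc, pow_abs_dlt hp2]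
  calc a n * (|X| ^ (p-1) * |dlt (pos u) n|)
      ≤ a n * (((s+t) * |dlt u n|) ^ (p-1) * |dlt u n|) :=
        mul_le_mul_of_nonneg_left h2 (ha n).le
    _ = (s+t)^(p-1) * (a n * |dlt u n| ^ p) := by rw [h3]; ring

lemma summable_Fa_neg (hp2 : 2 ≤ p) (ha : ∀ n, 0 < a n) (hb : ∀ n, 0 < b n)
    (hs : 0 ≤ s) (ht : 0 ≤ t) (hu : memE a b p u) :
    Summable (fun n =>
      a n * (dlt (fun n => s * pos u n + t * neg u n) n ^ (p-1) * dlt (neg u) n)) := by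
  rw [← summable_abs_iff]
  apply Summable.of_nonneg_of_le (fun n => abs_nonneg _)
    _ ((summable_a_dlt hp2 ha hb hu).mul_left ((s+t)^(p-1)))
  intro n
  set X := dlt (fun n => s * pos u n + t * neg u n) n with hX
  have e1 : |a n * (X ^ (p-1) * dlt (neg u) n)| = a n * (|X| ^ (p-1) * |dlt (neg u) n|) := by
    rw [abs_mul, abs_mul, abs_pow, abs_of_nonneg (ha n).le]
  rw [e1]
  have h1 : |X| ^ (p-1) ≤ ((s+t) * |dlt u n|) ^ (p-1) :=
    pow_le_pow_left₀ (abs_nonneg _) (abs_dlt_z_le hs ht u n) _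
  have h2 : |X| ^ (p-1) * |dlt (neg u) n| ≤ ((s+t) * |dlt u n|) ^ (p-1) * |dlt u n| := by
    apply mul_le_mul h1 (abs_dlt_neg_le u n) (abs_nonneg _) (by positivity)
  have h3 : ((s+t) * |dlt u n|) ^ (p-1) * |dlt u n| = (s+t)^(p-1) * |dlt u n| ^ p := by
    rw [mul_pow, mul_assoc, pow_abs_dlt hp2]
  calc a n * (|X| ^ (p-1) * |dlt (neg u) n|)
      ≤ a n * (((s+t) * |dlt u n|) ^ (p-1) * |dlt u n|) :=
        mul_le_mul_of_nonneg_left h2 (ha n).le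
    _ = (s+t)^(p-1) * (a n * |dlt u n| ^ p) := by rw [h3]; ring

lemma bpart_z (hpe : Even p) (hp2 : 2 ≤ p) (hs : 0 ≤ s) (ht : 0 ≤ t) (u : ℤ → ℝ) (n : ℤ) :
    b n * |s * pos u n + t * neg u n| ^ (p-2) * (s * pos u n + t * neg u n) * (s * pos u n)
      = s^p * (b n * |pos u n| ^ p) := by
  rcases posneg_cases u n with ⟨h, hv, hw⟩ | ⟨h, hv, hw⟩
  · rw [hw, mul_zero, add_zero]
    have := abs_pow_self hp2 (s * pos u n)
    calc b n * |s * pos u n| ^ (p-2) * (s * pos u n) * (s * pos u n)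
        = b n * (|s * pos u n| ^ (p-2) * (s * pos u n) * (s * pos u n)) := by ring
      _ = b n * |s * pos u n| ^ p := by rw [this]
      _ = s^p * (b n * |pos u n| ^ p) := by
          rw [abs_mul, abs_of_nonneg hs, mul_pow]; ring
  · rw [hv, mul_zero, mul_zero, abs_zero, zero_pow (by omega : p ≠ 0)]
    ring

lemma cpart_z (hq0 : q ≠ 0) (u : ℤ → ℝ) (n : ℤ) :
    c n * |s * pos u n + t * neg u n| ^ (q-2) * (s * pos u n + t * neg u n)
        * (s * pos u n) * Real.log (|s * pos u n + t * neg u n| ^ r)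
      = logSummand c q r (fun m => s * pos u m) n := by
  rcases posneg_cases u n with ⟨h, hv, hw⟩ | ⟨h, hv, hw⟩
  · rw [hw, mul_zero, add_zero]
    exact c_term_self hq0 (c n) (s * pos u n)
  · rw [hv, mul_zero, mul_zero]
    show _ = c n * |s * pos u n| ^ q * Real.log (|s * pos u n| ^ r)
    rw [hv, mul_zero, abs_zero, Real.zero_rpow hq0]
    ring

lemma cpart_z_neg (hq0 : q ≠ 0) (u : ℤ → ℝ) (n : ℤ) :
    c n * |s * pos u n + t * neg u n| ^ (q-2) * (s * pos u n + t * neg u n)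
        * (t * neg u n) * Real.log (|s * pos u n + t * neg u n| ^ r)
      = logSummand c q r (fun m => t * neg u m) n := by
  rcases posneg_cases u n with ⟨h, hv, hw⟩ | ⟨h, hv, hw⟩
  · rw [hw, mul_zero, mul_zero]
    show _ = c n * |t * neg u n| ^ q * Real.log (|t * neg u n| ^ r)
    rw [hw, mul_zero, abs_zero, Real.zero_rpow hq0]
    ring
  · rw [hv, mul_zero, zero_add]
    exact c_term_self hq0 (c n) (t * neg u n)

lemma bpart_z_neg (hpe : Even p) (hp2 : 2 ≤ p) (hs : 0 ≤ s) (ht : 0 ≤ t) (u : ℤ → ℝ) (n : ℤ) :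
    b n * |s * pos u n + t * neg u n| ^ (p-2) * (s * pos u n + t * neg u n) * (t * neg u n)
      = t^p * (b n * |neg u n| ^ p) := by
  rcases posneg_cases u n with ⟨h, hv, hw⟩ | ⟨h, hv, hw⟩
  · rw [hw, mul_zero, mul_zero, abs_zero, zero_pow (by omega : p ≠ 0)]
    ring
  · rw [hv, mul_zero, zero_add]
    have := abs_pow_self hp2 (t * neg u n)
    calc b n * |t * neg u n| ^ (p-2) * (t * neg u n) * (t * neg u n)
        = b n * (|t * neg u n| ^ (p-2) * (t * neg u n) * (t * neg u n)) := by ring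
      _ = b n * |t * neg u n| ^ p := by rw [this]
      _ = t^p * (b n * |neg u n| ^ p) := by
          rw [abs_mul, abs_of_nonneg ht, mul_pow]; ring

lemma first_summand_z_pos (hpe : Even p) (hp2 : 2 ≤ p) (hs : 0 ≤ s) (ht : 0 ≤ t)
    (u : ℤ → ℝ) (n : ℤ) :
    a n * |dlt (fun n => s * pos u n + t * neg u n) n| ^ (p-2)
        * dlt (fun n => s * pos u n + t * neg u n) n * dlt (fun n => s * pos u n) n
      + b n * |s * pos u n + t * neg u n| ^ (p-2) * (s * pos u n + t * neg u n)
          * (s * pos u n)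
    = s * (a n * (dlt (fun n => s * pos u n + t * neg u n) n ^ (p-1) * dlt (pos u) n))
      + s^p * (b n * |pos u n| ^ p) := by
  rw [dlt_smul s (pos u) n, bpart_z hpe hp2 hs ht u n]
  set X := dlt (fun n => s * pos u n + t * neg u n) n with hX
  rw [show a n * |X| ^ (p-2) * X * (s * dlt (pos u) n)
      = a n * (|X| ^ (p-2) * X * (s * dlt (pos u) n)) by ring,
    show |X| ^ (p-2) * X * (s * dlt (pos u) n) = X ^ (p-1) * (s * dlt (pos u) n) from
      apart_signed hpe hp2 X _]
  ring

lemma first_summand_z_neg (hpe : Even p) (hp2 : 2 ≤ p) (hs : 0 ≤ s) (ht : 0 ≤ t)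
    (u : ℤ → ℝ) (n : ℤ) :
    a n * |dlt (fun n => s * pos u n + t * neg u n) n| ^ (p-2)
        * dlt (fun n => s * pos u n + t * neg u n) n * dlt (fun n => t * neg u n) n
      + b n * |s * pos u n + t * neg u n| ^ (p-2) * (s * pos u n + t * neg u n)
          * (t * neg u n)
    = t * (a n * (dlt (fun n => s * pos u n + t * neg u n) n ^ (p-1) * dlt (neg u) n))
      + t^p * (b n * |neg u n| ^ p) := by
  rw [dlt_smul t (neg u) n, bpart_z_neg hpe hp2 hs ht u n]
  set X := dlt (fun n => s * pos u n + t * neg u n) n with hX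
  rw [show a n * |X| ^ (p-2) * X * (t * dlt (neg u) n)
      = a n * (|X| ^ (p-2) * X * (t * dlt (neg u) n)) by ring,
    show |X| ^ (p-2) * X * (t * dlt (neg u) n) = X ^ (p-1) * (t * dlt (neg u) n) from
      apart_signed hpe hp2 X _]
  ring

lemma pr_z_pos (hpe : Even p) (hp2 : 2 ≤ p) (hpq : (p:ℝ) < q) (hr1 : 1 ≤ r)
    (ha : ∀ n, 0 < a n) (hb : ∀ n, 0 < b n) (hc : ∀ n, 0 < c n)
    (hs : 0 < s) (ht : 0 < t) (hu : memD a b c p q r u)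
    (hcq : Summable (fun n => c n * |u n| ^ q)) :
    pr a b c p q r (fun n => s * pos u n + t * neg u n) (fun n => s * pos u n)
      = (s * (∑' n, a n * (dlt (fun n => s * pos u n + t * neg u n) n ^ (p-1)
            * dlt (pos u) n))
        + s^p * (∑' n, b n * |pos u n| ^ p))
        - s^q * (r * Real.log s * (∑' n, c n * |pos u n| ^ q)
            + ∑' n, logSummand c q r (pos u) n) := by
  have hq0 : 0 < q := hq0' hp2 hpq
  have hcqv := summable_cq_pos hq0 hc hcq
  have hlogv := summable_log_pos hq0.ne' hu.2
  rw [pr]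
  congr 1
  · rw [← tsum_mul_left (a := s), ← tsum_mul_left (a := s^p),
      ← Summable.tsum_add ((summable_Fa_pos hp2 ha hb hs.le ht.le hu.1).mul_left s)
        ((summable_b_pos hp2 ha hb hu.1).mul_left (s^p))]
    exact tsum_congr (fun n => first_summand_z_pos hpe hp2 hs.le ht.le u n)
  · calc (∑' n, c n * |s * pos u n + t * neg u n| ^ (q-2)
          * (s * pos u n + t * neg u n) * (s * pos u n)
          * Real.log (|s * pos u n + t * neg u n| ^ r))
        = ∑' n, logSummand c q r (fun m => s * pos u m) n :=
          tsum_congr (fun n => cpart_z hq0.ne' u n)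
      _ = s^q * (r * Real.log s * (∑' n, c n * |pos u n| ^ q)
            + ∑' n, logSummand c q r (pos u) n) :=
          tsum_logSummand_smul hq0 hr1 hs hcqv hlogv

lemma pr_z_neg (hpe : Even p) (hp2 : 2 ≤ p) (hpq : (p:ℝ) < q) (hr1 : 1 ≤ r)
    (ha : ∀ n, 0 < a n) (hb : ∀ n, 0 < b n) (hc : ∀ n, 0 < c n)
    (hs : 0 < s) (ht : 0 < t) (hu : memD a b c p q r u)
    (hcq : Summable (fun n => c n * |u n| ^ q)) :
    pr a b c p q r (fun n => s * pos u n + t * neg u n) (fun n => t * neg u n)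
      = (t * (∑' n, a n * (dlt (fun n => s * pos u n + t * neg u n) n ^ (p-1)
            * dlt (neg u) n))
        + t^p * (∑' n, b n * |neg u n| ^ p))
        - t^q * (r * Real.log t * (∑' n, c n * |neg u n| ^ q)
            + ∑' n, logSummand c q r (neg u) n) := by
  have hq0 : 0 < q := hq0' hp2 hpq
  have hcqw := summable_cq_neg hq0 hc hcq
  have hlogw := summable_log_neg hq0.ne' hu.2
  rw [pr]
  congr 1
  · rw [← tsum_mul_left (a := t), ← tsum_mul_left (a := t^p),
      ← Summable.tsum_add ((summable_Fa_neg hp2 ha hb hs.le ht.le hu.1).mul_left t)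
        ((summable_b_neg hp2 ha hb hu.1).mul_left (t^p))]
    exact tsum_congr (fun n => first_summand_z_neg hpe hp2 hs.le ht.le u n)
  · calc (∑' n, c n * |s * pos u n + t * neg u n| ^ (q-2)
          * (s * pos u n + t * neg u n) * (t * neg u n)
          * Real.log (|s * pos u n + t * neg u n| ^ r))
        = ∑' n, logSummand c q r (fun m => t * neg u m) n :=
          tsum_congr (fun n => cpart_z_neg hq0.ne' u n)
      _ = t^q * (r * Real.log t * (∑' n, c n * |neg u n| ^ q)
            + ∑' n, logSummand c q r (neg u) n) :=
          tsum_logSummand_smul hq0 hr1 ht hcqw hlogw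

end przlem
section enzle

variable {p : ℕ} {q r : ℝ} {a b c : ℤ → ℝ} {u : ℤ → ℝ} {s t : ℝ}

lemma tsum_a_pos_le (hp2 : 2 ≤ p) (ha : ∀ n, 0 < a n) (hb : ∀ n, 0 < b n)
    (hu : memE a b p u) :
    ∑' n, a n * |dlt (pos u) n| ^ p
      ≤ ∑' n, a n * (|dlt u n| ^ (p-1) * |dlt (pos u) n|) := by
  apply Summable.tsum_le_tsum _ (summable_a_dlt hp2 ha hb (memE_pos hp2 ha hb hu))
    (summable_Da_pos hp2 ha hb hu)
  intro n
  have h1 : |dlt (pos u) n| ^ (p-1) * |dlt (pos u) n|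
      ≤ |dlt u n| ^ (p-1) * |dlt (pos u) n| :=
    mul_le_mul_of_nonneg_right
      (pow_le_pow_left₀ (abs_nonneg _) (abs_dlt_pos_le u n) (p-1)) (abs_nonneg _)
  rw [pow_abs_dlt hp2 (pos u) n] at h1
  exact mul_le_mul_of_nonneg_left h1 (ha n).le

lemma tsum_a_neg_le (hp2 : 2 ≤ p) (ha : ∀ n, 0 < a n) (hb : ∀ n, 0 < b n)
    (hu : memE a b p u) :
    ∑' n, a n * |dlt (neg u) n| ^ p
      ≤ ∑' n, a n * (|dlt u n| ^ (p-1) * |dlt (neg u) n|) := by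
  apply Summable.tsum_le_tsum _ (summable_a_dlt hp2 ha hb (memE_neg hp2 ha hb hu))
    (summable_Da_neg hp2 ha hb hu)
  intro n
  have h1 : |dlt (neg u) n| ^ (p-1) * |dlt (neg u) n|
      ≤ |dlt u n| ^ (p-1) * |dlt (neg u) n| :=
    mul_le_mul_of_nonneg_right
      (pow_le_pow_left₀ (abs_nonneg _) (abs_dlt_neg_le u n) (p-1)) (abs_nonneg _)
  rw [pow_abs_dlt hp2 (neg u) n] at h1
  exact mul_le_mul_of_nonneg_left h1 (ha n).le

lemma En_z_le (hpe : Even p) (hp2 : 2 ≤ p) (hpq : (p:ℝ) < q) (hr1 : 1 ≤ r)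
    (ha : ∀ n, 0 < a n) (hb : ∀ n, 0 < b n) (hc : ∀ n, 0 < c n)
    (hs : 0 ≤ s) (ht : 0 ≤ t) (hu : memD a b c p q r u)
    (hcq : Summable (fun n => c n * |u n| ^ q)) :
    En a b c p q r (fun n => s * pos u n + t * neg u n)
      ≤ Phi p q r
          ((∑' n, a n * (|dlt u n| ^ (p-1) * |dlt (pos u) n|)) + ∑' n, b n * |pos u n| ^ p)
          (∑' n, c n * |pos u n| ^ q) (∑' n, logSummand c q r (pos u) n) s
        + Phi p q r
          ((∑' n, a n * (|dlt u n| ^ (p-1) * |dlt (neg u) n|)) + ∑' n, b n * |neg u n| ^ p)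
          (∑' n, c n * |neg u n| ^ q) (∑' n, logSummand c q r (neg u) n) t := by
  have hq0 : 0 < q := hq0' hp2 hpq
  have hp0 : (0:ℝ) < p := hp0' hp2
  rcases eq_or_lt_of_le hs with hs0 | hs0 <;> rcases eq_or_lt_of_le ht with ht0 | ht0
  · -- s = 0, t = 0
    rw [← hs0, ← ht0]
    have hfun : (fun n => (0:ℝ) * pos u n + (0:ℝ) * neg u n) = fun n => (0:ℝ) * u n := by
      funext n; ring
    rw [hfun, En_zero_smul hp2 hpq u, Phi_zero hp2 hpq, Phi_zero hp2 hpq, add_zero]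
  · -- s = 0, t > 0
    rw [← hs0]
    have hfun : (fun n => (0:ℝ) * pos u n + t * neg u n) = fun n => t * neg u n := by
      funext n; ring
    rw [hfun, Phi_zero hp2 hpq, zero_add]
    rw [En_smul hp2 hpq hr1 ha hb ht0 (summable_cq_neg hq0 hc hcq)
      (summable_log_neg hq0.ne' hu.2)]
    apply Phi_K_mono _ ht
    rw [tsum_nsum_split hp2 ha hb (memE_neg hp2 ha hb hu.1)]
    have := tsum_a_neg_le hp2 ha hb hu.1
    linarith
  · -- s > 0, t = 0
    rw [← ht0]
    have hfun : (fun n => s * pos u n + (0:ℝ) * neg u n) = fun n => s * pos u n := by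
      funext n; ring
    rw [hfun, Phi_zero hp2 hpq, add_zero]
    rw [En_smul hp2 hpq hr1 ha hb hs0 (summable_cq_pos hq0 hc hcq)
      (summable_log_pos hq0.ne' hu.2)]
    apply Phi_K_mono _ hs
    rw [tsum_nsum_split hp2 ha hb (memE_pos hp2 ha hb hu.1)]
    have := tsum_a_pos_le hp2 ha hb hu.1
    linarith
  · -- s > 0, t > 0
    rw [En_z_eq hpe hp2 hpq hr1 ha hb hc hs0 ht0 hu hcq,
      Phi_add_K, Phi_add_K]
    have hkin := tsum_az_le hpe hp2 ha hb hs ht hu.1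
    have := mul_le_mul_of_nonneg_left hkin (by positivity : (0:ℝ) ≤ 1/(p:ℝ))
    linarith

/-- The "abs" form of the kinetic sum agrees with the sum over `z`. -/
lemma summable_Habs (hp2 : 2 ≤ p) (ha : ∀ n, 0 < a n) (hb : ∀ n, 0 < b n)
    (hs : 0 ≤ s) (ht : 0 ≤ t) (hu : memE a b p u) :
    Summable (fun n =>
      a n * (s * |dlt (pos u) n| + t * |dlt (neg u) n|) ^ p) := by
  apply Summable.congr (summable_az hp2 ha hb hs ht hu)
  intro n
  rw [abs_dlt_z hs ht]

lemma Habs_eq (hs : 0 ≤ s) (ht : 0 ≤ t) (u : ℤ → ℝ) :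
    ∑' n, a n * (s * |dlt (pos u) n| + t * |dlt (neg u) n|) ^ p
      = ∑' n, a n * |dlt (fun n => s * pos u n + t * neg u n) n| ^ p :=
  tsum_congr (fun n => by rw [abs_dlt_z hs ht])

/-- `G = En ∘ z` on the closed quadrant. -/
lemma G_eq_En (hpe : Even p) (hp2 : 2 ≤ p) (hpq : (p:ℝ) < q) (hr1 : 1 ≤ r)
    (ha : ∀ n, 0 < a n) (hb : ∀ n, 0 < b n) (hc : ∀ n, 0 < c n)
    (hs : 0 ≤ s) (ht : 0 ≤ t) (hu : memD a b c p q r u)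
    (hcq : Summable (fun n => c n * |u n| ^ q)) :
    (1/(p:ℝ)) * (∑' n, a n * (s * |dlt (pos u) n| + t * |dlt (neg u) n|) ^ p)
        + Phi p q r (∑' n, b n * |pos u n| ^ p) (∑' n, c n * |pos u n| ^ q)
            (∑' n, logSummand c q r (pos u) n) s
        + Phi p q r (∑' n, b n * |neg u n| ^ p) (∑' n, c n * |neg u n| ^ q)
            (∑' n, logSummand c q r (neg u) n) t
      = En a b c p q r (fun n => s * pos u n + t * neg u n) := by
  have hq0 : 0 < q := hq0' hp2 hpq
  rw [Habs_eq hs ht]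
  rcases eq_or_lt_of_le hs with hs0 | hs0 <;> rcases eq_or_lt_of_le ht with ht0 | ht0
  · rw [← hs0, ← ht0]
    have hfun : (fun n => (0:ℝ) * pos u n + (0:ℝ) * neg u n) = fun n => (0:ℝ) * u n := by
      funext n; ring
    rw [hfun, En_zero_smul hp2 hpq u, Phi_zero hp2 hpq, Phi_zero hp2 hpq]
    have hz : ∀ n : ℤ, a n * |dlt (fun n => (0:ℝ) * pos u n + (0:ℝ) * neg u n) n| ^ p
        = 0 := by
      intro n
      rw [abs_dlt_z (le_refl (0:ℝ)) (le_refl (0:ℝ))]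
      simp [zero_pow (by omega : p ≠ 0)]
    rw [hfun] at hz
    rw [tsum_congr hz, tsum_zero]
    ring
  · rw [← hs0]
    have hfun : (fun n => (0:ℝ) * pos u n + t * neg u n) = fun n => t * neg u n := by
      funext n; ring
    rw [hfun, Phi_zero hp2 hpq]
    rw [En_smul hp2 hpq hr1 ha hb ht0 (summable_cq_neg hq0 hc hcq)
      (summable_log_neg hq0.ne' hu.2)]
    rw [tsum_nsum_split hp2 ha hb (memE_neg hp2 ha hb hu.1), Phi_add_K]
    have hkin : ∑' n, a n * |dlt (fun n => t * neg u n) n| ^ p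
        = t ^ p * ∑' n, a n * |dlt (neg u) n| ^ p := by
      rw [← tsum_mul_left]
      apply tsum_congr
      intro n
      rw [dlt_smul, abs_mul, abs_of_nonneg ht, mul_pow]
      ring
    rw [hkin]
    ring
  · rw [← ht0]
    have hfun : (fun n => s * pos u n + (0:ℝ) * neg u n) = fun n => s * pos u n := by
      funext n; ring
    rw [hfun, Phi_zero hp2 hpq]
    rw [En_smul hp2 hpq hr1 ha hb hs0 (summable_cq_pos hq0 hc hcq)
      (summable_log_pos hq0.ne' hu.2)]
    rw [tsum_nsum_split hp2 ha hb (memE_pos hp2 ha hb hu.1), Phi_add_K]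
    have hkin : ∑' n, a n * |dlt (fun n => s * pos u n) n| ^ p
        = s ^ p * ∑' n, a n * |dlt (pos u) n| ^ p := by
      rw [← tsum_mul_left]
      apply tsum_congr
      intro n
      rw [dlt_smul, abs_mul, abs_of_nonneg hs, mul_pow]
      ring
    rw [hkin]
    ring
  · rw [En_z_eq hpe hp2 hpq hr1 ha hb hc hs0 ht0 hu hcq]

end enzle
section tangent

variable {p : ℕ} {q r : ℝ} {a b c : ℤ → ℝ} {u : ℤ → ℝ}

lemma summable_signed (hpe : Even p) (hp2 : 2 ≤ p) (ha : ∀ n, 0 < a n) (hb : ∀ n, 0 < b n)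
    {s t : ℝ} (hs : 0 ≤ s) (ht : 0 ≤ t) (hu : memE a b p u) :
    Summable (fun n => a n * dlt (fun n => s * pos u n + t * neg u n) n ^ p) := by
  apply Summable.congr (summable_az hp2 ha hb hs ht hu)
  intro n
  rw [hpe.pow_abs]

lemma Hfun_tangent_s (hpe : Even p) (hp2 : 2 ≤ p) (ha : ∀ n, 0 < a n) (hb : ∀ n, 0 < b n)
    (hu : memE a b p u) {s₀ t₀ s : ℝ} (hs₀ : 0 ≤ s₀) (ht₀ : 0 ≤ t₀) (hs : 0 ≤ s) :
    (∑' n, a n * (s₀ * |dlt (pos u) n| + t₀ * |dlt (neg u) n|) ^ p)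
      + ((p:ℝ) * (s - s₀))
        * (∑' n, a n * (dlt (fun n => s₀ * pos u n + t₀ * neg u n) n ^ (p-1)
            * dlt (pos u) n))
    ≤ ∑' n, a n * (s * |dlt (pos u) n| + t₀ * |dlt (neg u) n|) ^ p := by
  have S1 : Summable (fun n => a n * dlt (fun n => s₀ * pos u n + t₀ * neg u n) n ^ p) :=
    summable_signed hpe hp2 ha hb hs₀ ht₀ hu
  have S2 := (summable_Fa_pos hp2 ha hb hs₀ ht₀ hu).mul_left ((p:ℝ) * (s - s₀))
  have e1 : ∑' n, a n * (s₀ * |dlt (pos u) n| + t₀ * |dlt (neg u) n|) ^ p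
      = ∑' n, a n * dlt (fun n => s₀ * pos u n + t₀ * neg u n) n ^ p :=
    tsum_congr (fun n => by rw [← abs_dlt_z hs₀ ht₀ u n, hpe.pow_abs])
  have e2 : ∑' n, a n * (s * |dlt (pos u) n| + t₀ * |dlt (neg u) n|) ^ p
      = ∑' n, a n * dlt (fun n => s * pos u n + t₀ * neg u n) n ^ p :=
    tsum_congr (fun n => by rw [← abs_dlt_z hs ht₀ u n, hpe.pow_abs])
  rw [e1, e2, ← tsum_mul_left (a := (p:ℝ) * (s - s₀)), ← Summable.tsum_add S1 S2]
  apply Summable.tsum_le_tsum _ (S1.add S2) (summable_signed hpe hp2 ha hb hs ht₀ hu)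
  intro n
  have hkey := pow_tangent hpe hp2 (dlt (fun n => s₀ * pos u n + t₀ * neg u n) n)
    (dlt (fun n => s * pos u n + t₀ * neg u n) n)
  have hdiff : dlt (fun n => s * pos u n + t₀ * neg u n) n
      - dlt (fun n => s₀ * pos u n + t₀ * neg u n) n = (s - s₀) * dlt (pos u) n := by
    rw [dlt_z, dlt_z]
    ring
  rw [hdiff] at hkey
  have := mul_le_mul_of_nonneg_left hkey (ha n).le
  nlinarith [this]

lemma Hfun_tangent_t (hpe : Even p) (hp2 : 2 ≤ p) (ha : ∀ n, 0 < a n) (hb : ∀ n, 0 < b n)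
    (hu : memE a b p u) {s₀ t₀ t : ℝ} (hs₀ : 0 ≤ s₀) (ht₀ : 0 ≤ t₀) (ht : 0 ≤ t) :
    (∑' n, a n * (s₀ * |dlt (pos u) n| + t₀ * |dlt (neg u) n|) ^ p)
      + ((p:ℝ) * (t - t₀))
        * (∑' n, a n * (dlt (fun n => s₀ * pos u n + t₀ * neg u n) n ^ (p-1)
            * dlt (neg u) n))
    ≤ ∑' n, a n * (s₀ * |dlt (pos u) n| + t * |dlt (neg u) n|) ^ p := by
  have S1 : Summable (fun n => a n * dlt (fun n => s₀ * pos u n + t₀ * neg u n) n ^ p) :=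
    summable_signed hpe hp2 ha hb hs₀ ht₀ hu
  have S2 := (summable_Fa_neg hp2 ha hb hs₀ ht₀ hu).mul_left ((p:ℝ) * (t - t₀))
  have e1 : ∑' n, a n * (s₀ * |dlt (pos u) n| + t₀ * |dlt (neg u) n|) ^ p
      = ∑' n, a n * dlt (fun n => s₀ * pos u n + t₀ * neg u n) n ^ p :=
    tsum_congr (fun n => by rw [← abs_dlt_z hs₀ ht₀ u n, hpe.pow_abs])
  have e2 : ∑' n, a n * (s₀ * |dlt (pos u) n| + t * |dlt (neg u) n|) ^ p
      = ∑' n, a n * dlt (fun n => s₀ * pos u n + t * neg u n) n ^ p :=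
    tsum_congr (fun n => by rw [← abs_dlt_z hs₀ ht u n, hpe.pow_abs])
  rw [e1, e2, ← tsum_mul_left (a := (p:ℝ) * (t - t₀)), ← Summable.tsum_add S1 S2]
  apply Summable.tsum_le_tsum _ (S1.add S2) (summable_signed hpe hp2 ha hb hs₀ ht hu)
  intro n
  have hkey := pow_tangent hpe hp2 (dlt (fun n => s₀ * pos u n + t₀ * neg u n) n)
    (dlt (fun n => s₀ * pos u n + t * neg u n) n)
  have hdiff : dlt (fun n => s₀ * pos u n + t * neg u n) n
      - dlt (fun n => s₀ * pos u n + t₀ * neg u n) n = (t - t₀) * dlt (neg u) n := by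
    rw [dlt_z, dlt_z]
    ring
  rw [hdiff] at hkey
  have := mul_le_mul_of_nonneg_left hkey (ha n).le
  nlinarith [this]

end tangent
section existsM

variable {p : ℕ} {q r : ℝ} {a b c : ℤ → ℝ} {u : ℤ → ℝ} {b0 c0 : ℝ}

set_option maxHeartbeats 1600000 in
lemma exists_mem_Mset_scale (H : Hyps p q r a b c b0 c0) (hu : memD a b c p q r u)
    (hvne : pos u ≠ 0) (hwne : neg u ≠ 0) :
    ∃ s₀ t₀ : ℝ, 0 < s₀ ∧ 0 < t₀ ∧
      (fun n => s₀ * pos u n + t₀ * neg u n) ∈ Mset a b c p q r := by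
  obtain ⟨hp2, hpe, hpq, hr1, ha, hb, hc, hb0, hbb, hc0, hcc, hcsum⟩ := H
  have H : Hyps p q r a b c b0 c0 := ⟨hp2, hpe, hpq, hr1, ha, hb, hc, hb0, hbb, hc0, hcc, hcsum⟩
  have hq0 : 0 < q := hq0' hp2 hpq
  have hp0 : (0:ℝ) < p := hp0' hp2
  have hcq : Summable (fun n => c n * |u n| ^ q) := memD_cq_summable H hu.1
  have hune : u ≠ 0 := by
    intro h
    apply hvne
    rw [h]
    funext n
    show max ((0 : ℤ → ℝ) n) 0 = (0 : ℤ → ℝ) n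
    simp
  have hNpos : 0 < ∑' n, nsum a b p u n := tsum_nsum_pos hp2 ha hb hu.1 hune
  -- positivity of the coefficients
  have hKbv_pos : 0 < ∑' n, b n * |pos u n| ^ p := by
    obtain ⟨n0, hn0⟩ := exists_ne_zero hvne
    exact lt_of_lt_of_le (mul_pos (hb n0) (pow_pos (abs_pos.mpr hn0) p))
      (Summable.le_tsum (summable_b_pos hp2 ha hb hu.1) n0
        (fun j _ => mul_nonneg (hb j).le (by positivity)))
  have hKbw_pos : 0 < ∑' n, b n * |neg u n| ^ p := by
    obtain ⟨n0, hn0⟩ := exists_ne_zero hwne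
    exact lt_of_lt_of_le (mul_pos (hb n0) (pow_pos (abs_pos.mpr hn0) p))
      (Summable.le_tsum (summable_b_neg hp2 ha hb hu.1) n0
        (fun j _ => mul_nonneg (hb j).le (by positivity)))
  have hAv_pos : 0 < ∑' n, c n * |pos u n| ^ q :=
    tsum_cq_pos hq0 hc (summable_cq_pos hq0 hc hcq) hvne
  have hAw_pos : 0 < ∑' n, c n * |neg u n| ^ q :=
    tsum_cq_pos hq0 hc (summable_cq_neg hq0 hc hcq) hwne
  have hDav_nonneg : 0 ≤ ∑' n, a n * (|dlt u n| ^ (p-1) * |dlt (pos u) n|) :=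
    tsum_nonneg (fun n => mul_nonneg (ha n).le
      (mul_nonneg (by positivity) (abs_nonneg _)))
  have hDaw_nonneg : 0 ≤ ∑' n, a n * (|dlt u n| ^ (p-1) * |dlt (neg u) n|) :=
    tsum_nonneg (fun n => mul_nonneg (ha n).le
      (mul_nonneg (by positivity) (abs_nonneg _)))
  -- the fibering function on the quadrant
  set G : ℝ × ℝ → ℝ := fun st =>
    (1/(p:ℝ)) * (∑' n, a n * (st.1 * |dlt (pos u) n| + st.2 * |dlt (neg u) n|) ^ p)
      + Phi p q r (∑' n, b n * |pos u n| ^ p) (∑' n, c n * |pos u n| ^ q)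
          (∑' n, logSummand c q r (pos u) n) st.1
      + Phi p q r (∑' n, b n * |neg u n| ^ p) (∑' n, c n * |neg u n| ^ q)
          (∑' n, logSummand c q r (neg u) n) st.2
    with hGdef
  have hGEn : ∀ s t : ℝ, 0 ≤ s → 0 ≤ t →
      G (s, t) = En a b c p q r (fun n => s * pos u n + t * neg u n) := by
    intro s t hs ht
    rw [hGdef]
    exact G_eq_En hpe hp2 hpq hr1 ha hb hc hs ht hu hcq
  -- continuity on squares
  have hGcont : ∀ R : ℝ, 0 ≤ R → ContinuousOn G (Icc 0 R ×ˢ Icc 0 R) := by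
    intro R hR0
    rw [hGdef]
    apply ContinuousOn.add
    apply ContinuousOn.add
    · apply ContinuousOn.mul continuousOn_const
      rw [continuousOn_iff_continuous_restrict]
      apply continuous_tsum
        (f := fun n (x : ↥(Icc (0:ℝ) R ×ˢ Icc (0:ℝ) R)) =>
          a n * ((x:ℝ×ℝ).1 * |dlt (pos u) n| + (x:ℝ×ℝ).2 * |dlt (neg u) n|) ^ p)
        (u := fun n => a n * (R * |dlt u n|) ^ p)
      · intro i
        exact continuous_const.mul ((((continuous_fst.comp continuous_subtype_val).mul
          continuous_const).add
          ((continuous_snd.comp continuous_subtype_val).mul continuous_const)).pow p)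
      · apply Summable.congr ((summable_a_dlt hp2 ha hb hu.1).mul_left (R^p))
        intro n
        rw [mul_pow]
        ring
      · intro n x
        obtain ⟨⟨hx1, hx2⟩, ⟨hy1, hy2⟩⟩ := x.2
        have hsum_nonneg : 0 ≤ (x:ℝ×ℝ).1 * |dlt (pos u) n| + (x:ℝ×ℝ).2 * |dlt (neg u) n| :=
          add_nonneg (mul_nonneg hx1 (abs_nonneg _)) (mul_nonneg hy1 (abs_nonneg _))
        rw [Real.norm_eq_abs, abs_of_nonneg (mul_nonneg (ha n).le (pow_nonneg hsum_nonneg p))]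
        apply mul_le_mul_of_nonneg_left _ (ha n).le
        apply pow_le_pow_left₀ hsum_nonneg
        have h1 : (x:ℝ×ℝ).1 * |dlt (pos u) n| ≤ R * |dlt (pos u) n| :=
          mul_le_mul_of_nonneg_right hx2 (abs_nonneg _)
        have h2 : (x:ℝ×ℝ).2 * |dlt (neg u) n| ≤ R * |dlt (neg u) n| :=
          mul_le_mul_of_nonneg_right hy2 (abs_nonneg _)
        have h3 : R * |dlt (pos u) n| + R * |dlt (neg u) n| = R * |dlt u n| := by
          rw [← mul_add, ← abs_dlt_split u n]
        linarith
    · exact ContinuousOn.comp (Phi_contOn hp2 hpq) continuousOn_fst (fun st hst => hst.1.1)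
    · exact ContinuousOn.comp (Phi_contOn hp2 hpq) continuousOn_snd (fun st hst => hst.2.1)
  -- choose σ with G(σ,σ) > 0
  obtain ⟨σ, ⟨hσPhi, hσ1⟩, hσpos'⟩ :=
    (((Phi_pos_near_zero hp2 hpq hr1 (A := ∑' n, c n * |u n| ^ q)
        (B := ∑' n, logSummand c q r u n) hNpos).and
      ((eventually_lt_nhds one_pos).filter_mono nhdsWithin_le_nhds)).and
      self_mem_nhdsWithin).exists
  have hσpos : (0:ℝ) < σ := hσpos'
  have hGσ : 0 < G (σ, σ) := by
    rw [hGEn σ σ hσpos.le hσpos.le]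
    have h2 : (fun n => σ * pos u n + σ * neg u n) = fun n => σ * u n := by
      funext n
      rw [← pos_add_neg u n]
      ring
    rw [h2, En_smul hp2 hpq hr1 ha hb hσpos hcq hu.2]
    exact hσPhi
  -- choose R
  obtain ⟨Cv, hCv0, hCv⟩ := Phi_bddAbove hp2 hpq hr1
    (K := (∑' n, a n * (|dlt u n| ^ (p-1) * |dlt (pos u) n|)) + ∑' n, b n * |pos u n| ^ p)
    (B := ∑' n, logSummand c q r (pos u) n) hAv_pos
  obtain ⟨Cw, hCw0, hCw⟩ := Phi_bddAbove hp2 hpq hr1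
    (K := (∑' n, a n * (|dlt u n| ^ (p-1) * |dlt (neg u) n|)) + ∑' n, b n * |neg u n| ^ p)
    (B := ∑' n, logSummand c q r (neg u) n) hAw_pos
  obtain ⟨Rv, hRv⟩ := eventually_atTop.mp
    ((Phi_tendsto_atBot hp2 hpq hr1
      (K := (∑' n, a n * (|dlt u n| ^ (p-1) * |dlt (pos u) n|)) + ∑' n, b n * |pos u n| ^ p)
      (B := ∑' n, logSummand c q r (pos u) n) hAv_pos).eventually
      (eventually_le_atBot (G (σ, σ) - Cw - 1)))
  obtain ⟨Rw, hRw⟩ := eventually_atTop.mp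
    ((Phi_tendsto_atBot hp2 hpq hr1
      (K := (∑' n, a n * (|dlt u n| ^ (p-1) * |dlt (neg u) n|)) + ∑' n, b n * |neg u n| ^ p)
      (B := ∑' n, logSummand c q r (neg u) n) hAw_pos).eventually
      (eventually_le_atBot (G (σ, σ) - Cv - 1)))
  set R := max (max Rv Rw) 1 with hRdef
  have hR1 : (1:ℝ) ≤ R := le_max_right _ _
  have hR0 : (0:ℝ) ≤ R := by linarith
  have hRv' : Rv ≤ R := le_trans (le_max_left _ _) (le_max_left _ _)
  have hRw' : Rw ≤ R := le_trans (le_max_right _ _) (le_max_left _ _)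
  -- the global bound
  have hGle : ∀ s t : ℝ, 0 ≤ s → 0 ≤ t →
      G (s, t) ≤ Phi p q r
          ((∑' n, a n * (|dlt u n| ^ (p-1) * |dlt (pos u) n|)) + ∑' n, b n * |pos u n| ^ p)
          (∑' n, c n * |pos u n| ^ q) (∑' n, logSummand c q r (pos u) n) s
        + Phi p q r
          ((∑' n, a n * (|dlt u n| ^ (p-1) * |dlt (neg u) n|)) + ∑' n, b n * |neg u n| ^ p)
          (∑' n, c n * |neg u n| ^ q) (∑' n, logSummand c q r (neg u) n) t := by
    intro s t hs ht
    rw [hGEn s t hs ht]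
    exact En_z_le hpe hp2 hpq hr1 ha hb hc hs ht hu hcq
  -- extreme value theorem
  obtain ⟨st₀, hst₀, hmax'⟩ := ((isCompact_Icc (a := (0:ℝ)) (b := R)).prod
    (isCompact_Icc (a := (0:ℝ)) (b := R))).exists_isMaxOn
    ⟨(σ, σ), ⟨⟨hσpos.le, le_trans hσ1.le hR1⟩, ⟨hσpos.le, le_trans hσ1.le hR1⟩⟩⟩
    (hGcont R hR0)
  have hmax : ∀ x ∈ Icc (0:ℝ) R ×ˢ Icc (0:ℝ) R, G x ≤ G st₀ := isMaxOn_iff.mp hmax'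
  have hGσle : G (σ, σ) ≤ G st₀ :=
    hmax _ ⟨⟨hσpos.le, le_trans hσ1.le hR1⟩, ⟨hσpos.le, le_trans hσ1.le hR1⟩⟩
  have hs₀mem : st₀.1 ∈ Icc (0:ℝ) R := hst₀.1
  have ht₀mem : st₀.2 ∈ Icc (0:ℝ) R := hst₀.2
  -- the boundary s = 0 is excluded
  have hs₀pos : 0 < st₀.1 := by
    rcases eq_or_lt_of_le hs₀mem.1 with h0 | h0
    · exfalso
      obtain ⟨s₁, ⟨hs₁Phi, hs₁1⟩, hs₁pos'⟩ :=
        (((Phi_pos_near_zero hp2 hpq hr1 (A := ∑' n, c n * |pos u n| ^ q)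
            (B := ∑' n, logSummand c q r (pos u) n) hKbv_pos).and
          ((eventually_lt_nhds one_pos).filter_mono nhdsWithin_le_nhds)).and
          self_mem_nhdsWithin).exists
      have hs₁pos : (0:ℝ) < s₁ := hs₁pos'
      have hmem : (s₁, st₀.2) ∈ Icc (0:ℝ) R ×ˢ Icc (0:ℝ) R :=
        ⟨⟨hs₁pos.le, le_trans hs₁1.le hR1⟩, ht₀mem⟩
      have hle := hmax _ hmem
      have hmono : (∑' n, a n * ((0:ℝ) * |dlt (pos u) n| + st₀.2 * |dlt (neg u) n|) ^ p)
          ≤ ∑' n, a n * (s₁ * |dlt (pos u) n| + st₀.2 * |dlt (neg u) n|) ^ p := by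
        apply Summable.tsum_le_tsum _ (summable_Habs hp2 ha hb (le_refl 0) ht₀mem.1 hu.1)
          (summable_Habs hp2 ha hb hs₁pos.le ht₀mem.1 hu.1)
        intro n
        apply mul_le_mul_of_nonneg_left _ (ha n).le
        apply pow_le_pow_left₀ (add_nonneg (mul_nonneg (le_refl 0) (abs_nonneg _))
          (mul_nonneg ht₀mem.1 (abs_nonneg _)))
        have : 0 ≤ s₁ * |dlt (pos u) n| := mul_nonneg hs₁pos.le (abs_nonneg _)
        nlinarith [this]
      have hG0 : G (0, st₀.2) < G (s₁, st₀.2) := by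
        rw [hGdef]
        simp only
        rw [Phi_zero hp2 hpq]
        have := mul_le_mul_of_nonneg_left hmono (by positivity : (0:ℝ) ≤ 1/(p:ℝ))
        linarith
      have hGst : G st₀ = G (0, st₀.2) := by
        rw [h0, Prod.mk.eta]
      linarith [hG0, hle, hGst ▸ hle]
    · exact h0
  have ht₀pos : 0 < st₀.2 := by
    rcases eq_or_lt_of_le ht₀mem.1 with h0 | h0
    · exfalso
      obtain ⟨t₁, ⟨ht₁Phi, ht₁1⟩, ht₁pos'⟩ :=
        (((Phi_pos_near_zero hp2 hpq hr1 (A := ∑' n, c n * |neg u n| ^ q)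
            (B := ∑' n, logSummand c q r (neg u) n) hKbw_pos).and
          ((eventually_lt_nhds one_pos).filter_mono nhdsWithin_le_nhds)).and
          self_mem_nhdsWithin).exists
      have ht₁pos : (0:ℝ) < t₁ := ht₁pos'
      have hmem : (st₀.1, t₁) ∈ Icc (0:ℝ) R ×ˢ Icc (0:ℝ) R :=
        ⟨hs₀mem, ⟨ht₁pos.le, le_trans ht₁1.le hR1⟩⟩
      have hle := hmax _ hmem
      have hmono : (∑' n, a n * (st₀.1 * |dlt (pos u) n| + (0:ℝ) * |dlt (neg u) n|) ^ p)
          ≤ ∑' n, a n * (st₀.1 * |dlt (pos u) n| + t₁ * |dlt (neg u) n|) ^ p := by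
        apply Summable.tsum_le_tsum _ (summable_Habs hp2 ha hb hs₀mem.1 (le_refl 0) hu.1)
          (summable_Habs hp2 ha hb hs₀mem.1 ht₁pos.le hu.1)
        intro n
        apply mul_le_mul_of_nonneg_left _ (ha n).le
        apply pow_le_pow_left₀ (add_nonneg (mul_nonneg hs₀mem.1 (abs_nonneg _))
          (mul_nonneg (le_refl 0) (abs_nonneg _)))
        have : 0 ≤ t₁ * |dlt (neg u) n| := mul_nonneg ht₁pos.le (abs_nonneg _)
        nlinarith [this]
      have hG0 : G (st₀.1, 0) < G (st₀.1, t₁) := by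
        rw [hGdef]
        simp only
        rw [Phi_zero hp2 hpq]
        have := mul_le_mul_of_nonneg_left hmono (by positivity : (0:ℝ) ≤ 1/(p:ℝ))
        linarith
      have hGst : G st₀ = G (st₀.1, 0) := by
        rw [h0, Prod.mk.eta]
      linarith [hG0, hle, hGst ▸ hle]
    · exact h0
  -- the boundary s = R, t = R are excluded
  have hs₀ltR : st₀.1 < R := by
    rcases lt_or_eq_of_le hs₀mem.2 with h | h
    · exact h
    · exfalso
      have h1 := hGle st₀.1 st₀.2 hs₀mem.1 ht₀mem.1
      have h2 := hRv st₀.1 (h ▸ hRv')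
      have h3 := hCw st₀.2 ht₀mem.1
      rw [Prod.mk.eta] at h1
      linarith [hGσle]
  have ht₀ltR : st₀.2 < R := by
    rcases lt_or_eq_of_le ht₀mem.2 with h | h
    · exact h
    · exfalso
      have h1 := hGle st₀.1 st₀.2 hs₀mem.1 ht₀mem.1
      have h2 := hRw st₀.2 (h ▸ hRw')
      have h3 := hCv st₀.1 hs₀mem.1
      rw [Prod.mk.eta] at h1
      linarith [hGσle]
  -- first-order condition in the s-direction
  have hfoc_s : (∑' n, a n * (dlt (fun n => st₀.1 * pos u n + st₀.2 * neg u n) n ^ (p-1)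
        * dlt (pos u) n))
      + (st₀.1 ^ (p-1) * (∑' n, b n * |pos u n| ^ p)
        - st₀.1 ^ (q-1) * (r * (∑' n, c n * |pos u n| ^ q) * Real.log st₀.1
            + ∑' n, logSummand c q r (pos u) n)) = 0 := by
    apply foc_aux (Phi_hasDeriv hp2 hpq hs₀pos)
    filter_upwards [Ioo_mem_nhds hs₀pos hs₀ltR] with s hs
    have hsmax : G (s, st₀.2) ≤ G st₀ := hmax _ ⟨⟨hs.1.le, hs.2.le⟩, ht₀mem⟩
    rw [show G st₀ = G (st₀.1, st₀.2) by rw [Prod.mk.eta]] at hsmax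
    rw [hGdef] at hsmax
    simp only at hsmax
    have htan := Hfun_tangent_s hpe hp2 ha hb hu.1 hs₀mem.1 ht₀mem.1 hs.1.le
      (s := s) (t₀ := st₀.2)
    have hm1 := mul_le_mul_of_nonneg_left htan (by positivity : (0:ℝ) ≤ 1/(p:ℝ))
    rw [mul_add] at hm1
    have h2 : (1/(p:ℝ)) * ((p:ℝ) * (s - st₀.1)
          * (∑' n, a n * (dlt (fun n => st₀.1 * pos u n + st₀.2 * neg u n) n ^ (p-1)
              * dlt (pos u) n)))
        = (s - st₀.1) * (∑' n, a n * (dlt (fun n => st₀.1 * pos u n + st₀.2 * neg u n) n ^ (p-1)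
              * dlt (pos u) n)) := by
      field_simp
    rw [h2] at hm1
    linarith [hm1, hsmax]
  have hfoc_t : (∑' n, a n * (dlt (fun n => st₀.1 * pos u n + st₀.2 * neg u n) n ^ (p-1)
        * dlt (neg u) n))
      + (st₀.2 ^ (p-1) * (∑' n, b n * |neg u n| ^ p)
        - st₀.2 ^ (q-1) * (r * (∑' n, c n * |neg u n| ^ q) * Real.log st₀.2
            + ∑' n, logSummand c q r (neg u) n)) = 0 := by
    apply foc_aux (Phi_hasDeriv hp2 hpq ht₀pos)
    filter_upwards [Ioo_mem_nhds ht₀pos ht₀ltR] with t ht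
    have htmax : G (st₀.1, t) ≤ G st₀ := hmax _ ⟨hs₀mem, ⟨ht.1.le, ht.2.le⟩⟩
    rw [show G st₀ = G (st₀.1, st₀.2) by rw [Prod.mk.eta]] at htmax
    rw [hGdef] at htmax
    simp only at htmax
    have htan := Hfun_tangent_t hpe hp2 ha hb hu.1 hs₀mem.1 ht₀mem.1 ht.1.le
      (t := t) (s₀ := st₀.1)
    have hm1 := mul_le_mul_of_nonneg_left htan (by positivity : (0:ℝ) ≤ 1/(p:ℝ))
    rw [mul_add] at hm1
    have h2 : (1/(p:ℝ)) * ((p:ℝ) * (t - st₀.2)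
          * (∑' n, a n * (dlt (fun n => st₀.1 * pos u n + st₀.2 * neg u n) n ^ (p-1)
              * dlt (neg u) n)))
        = (t - st₀.2) * (∑' n, a n * (dlt (fun n => st₀.1 * pos u n + st₀.2 * neg u n) n ^ (p-1)
              * dlt (neg u) n)) := by
      field_simp
    rw [h2] at hm1
    linarith [hm1, htmax]
  -- conclude membership in Mset
  refine ⟨st₀.1, st₀.2, hs₀pos, ht₀pos,
    memD_z hp2 hpq hr1 ha hb hc hs₀pos ht₀pos hu hcq, ?_, ?_, ?_, ?_⟩
  · rw [pos_z hs₀pos.le ht₀pos.le u]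
    exact smul_ne_zero' H hs₀pos.ne' hvne
  · rw [neg_z hs₀pos.le ht₀pos.le u]
    exact smul_ne_zero' H ht₀pos.ne' hwne
  · rw [pos_z hs₀pos.le ht₀pos.le u,
      pr_z_pos hpe hp2 hpq hr1 ha hb hc hs₀pos ht₀pos hu hcq]
    have e1 : st₀.1 ^ p = st₀.1 ^ (p-1) * st₀.1 := by
      rw [← pow_succ]
      congr 1
      omega
    have e2 : st₀.1 ^ (q-1) * st₀.1 = st₀.1 ^ q := by
      rw [← Real.rpow_add_one hs₀pos.ne' (q-1)]
      congr 1
      ring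
    rw [e1, ← e2]
    linear_combination st₀.1 * hfoc_s
  · rw [neg_z hs₀pos.le ht₀pos.le u,
      pr_z_neg hpe hp2 hpq hr1 ha hb hc hs₀pos ht₀pos hu hcq]
    have e1 : st₀.2 ^ p = st₀.2 ^ (p-1) * st₀.2 := by
      rw [← pow_succ]
      congr 1
      omega
    have e2 : st₀.2 ^ (q-1) * st₀.2 = st₀.2 ^ q := by
      rw [← Real.rpow_add_one ht₀pos.ne' (q-1)]
      congr 1
      ring
    rw [e1, ← e2]
    linear_combination st₀.2 * hfoc_t

end existsM
section part2

variable {p : ℕ} {q r : ℝ} {a b c : ℤ → ℝ} {u : ℤ → ℝ} {b0 c0 : ℝ}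

variable (H : Hyps p q r a b c b0 c0)

include H in
lemma nehari_pos_M (hu : u ∈ Mset a b c p q r) :
    (∑' n, a n * (|dlt u n| ^ (p-1) * |dlt (pos u) n|)) + ∑' n, b n * |pos u n| ^ p
      = ∑' n, logSummand c q r (pos u) n := by
  have h := hu.2.2.2.1
  rw [pr_pos_eq H.hpe H.hp2 (hq0' H.hp2 H.hpq).ne' H.hr H.ha H.hb hu.1.1] at h
  linarith

include H in
lemma nehari_neg_M (hu : u ∈ Mset a b c p q r) :
    (∑' n, a n * (|dlt u n| ^ (p-1) * |dlt (neg u) n|)) + ∑' n, b n * |neg u n| ^ p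
      = ∑' n, logSummand c q r (neg u) n := by
  have h := hu.2.2.2.2
  rw [pr_neg_eq H.hpe H.hp2 (hq0' H.hp2 H.hpq).ne' H.hr H.ha H.hb hu.1.1] at h
  linarith

include H in
lemma Kv_nonneg (u : ℤ → ℝ) :
    0 ≤ (∑' n, a n * (|dlt u n| ^ (p-1) * |dlt (pos u) n|)) + ∑' n, b n * |pos u n| ^ p :=
  add_nonneg
    (tsum_nonneg (fun n => mul_nonneg (H.ha n).le
      (mul_nonneg (by positivity) (abs_nonneg _))))
    (tsum_nonneg (fun n => mul_nonneg (H.hb n).le (by positivity)))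

include H in
lemma Kw_nonneg (u : ℤ → ℝ) :
    0 ≤ (∑' n, a n * (|dlt u n| ^ (p-1) * |dlt (neg u) n|)) + ∑' n, b n * |neg u n| ^ p :=
  add_nonneg
    (tsum_nonneg (fun n => mul_nonneg (H.ha n).le
      (mul_nonneg (by positivity) (abs_nonneg _))))
    (tsum_nonneg (fun n => mul_nonneg (H.hb n).le (by positivity)))

include H in
lemma En_nonneg_on_Mset (hu : u ∈ Mset a b c p q r) : 0 ≤ En a b c p q r u := by
  have hcq := memD_cq_summable H hu.1.1
  rw [En_split_one H.hpe H.hp2 H.hpq H.hr H.ha H.hb H.hc hu.1.1 hu.1.2 hcq]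
  have h1 := Phi_one_nonneg H.hp2 H.hpq H.hr (Kv_nonneg H u)
    (tsum_cq_nonneg (q := q) H.hc (pos u)) (nehari_pos_M H hu)
  have h2 := Phi_one_nonneg H.hp2 H.hpq H.hr (Kw_nonneg H u)
    (tsum_cq_nonneg (q := q) H.hc (neg u)) (nehari_neg_M H hu)
  linarith

include H in
lemma fiber2_le_En_on_Mset (hu : u ∈ Mset a b c p q r) :
    ∀ y ∈ {y : ℝ | ∃ s t : ℝ, 0 ≤ s ∧ 0 ≤ t ∧
        y = En a b c p q r (fun n => s * pos u n + t * neg u n)},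
      y ≤ En a b c p q r u := by
  have hcq := memD_cq_summable H hu.1.1
  rintro y ⟨s, t, hs, ht, rfl⟩
  have h1 := En_z_le H.hpe H.hp2 H.hpq H.hr H.ha H.hb H.hc hs ht hu.1 hcq
  have h2 := Phi_le_Phi_one H.hp2 H.hpq H.hr (Kv_nonneg H u)
    (tsum_cq_nonneg (q := q) H.hc (pos u)) (nehari_pos_M H hu) hs
  have h3 := Phi_le_Phi_one H.hp2 H.hpq H.hr (Kw_nonneg H u)
    (tsum_cq_nonneg (q := q) H.hc (neg u)) (nehari_neg_M H hu) ht
  rw [En_split_one H.hpe H.hp2 H.hpq H.hr H.ha H.hb H.hc hu.1.1 hu.1.2 hcq]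
  linarith

include H in
lemma fiber2_bddAbove (hu : memD a b c p q r u) (hvne : pos u ≠ 0) (hwne : neg u ≠ 0) :
    ∃ C : ℝ, 0 ≤ C ∧ ∀ y ∈ {y : ℝ | ∃ s t : ℝ, 0 ≤ s ∧ 0 ≤ t ∧
        y = En a b c p q r (fun n => s * pos u n + t * neg u n)}, y ≤ C := by
  have hq0 : 0 < q := hq0' H.hp2 H.hpq
  have hcq := memD_cq_summable H hu.1
  have hAv_pos : 0 < ∑' n, c n * |pos u n| ^ q :=
    tsum_cq_pos hq0 H.hc (summable_cq_pos hq0 H.hc hcq) hvne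
  have hAw_pos : 0 < ∑' n, c n * |neg u n| ^ q :=
    tsum_cq_pos hq0 H.hc (summable_cq_neg hq0 H.hc hcq) hwne
  obtain ⟨Cv, hCv0, hCv⟩ := Phi_bddAbove H.hp2 H.hpq H.hr
    (K := (∑' n, a n * (|dlt u n| ^ (p-1) * |dlt (pos u) n|)) + ∑' n, b n * |pos u n| ^ p)
    (B := ∑' n, logSummand c q r (pos u) n) hAv_pos
  obtain ⟨Cw, hCw0, hCw⟩ := Phi_bddAbove H.hp2 H.hpq H.hr
    (K := (∑' n, a n * (|dlt u n| ^ (p-1) * |dlt (neg u) n|)) + ∑' n, b n * |neg u n| ^ p)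
    (B := ∑' n, logSummand c q r (neg u) n) hAw_pos
  refine ⟨Cv + Cw, by linarith, ?_⟩
  rintro y ⟨s, t, hs, ht, rfl⟩
  have h1 := En_z_le H.hpe H.hp2 H.hpq H.hr H.ha H.hb H.hc hs ht hu hcq
  have h2 := hCv s hs
  have h3 := hCw t ht
  linarith

include H in
lemma fiber2_zero_mem (u : ℤ → ℝ) :
    (0:ℝ) ∈ {y : ℝ | ∃ s t : ℝ, 0 ≤ s ∧ 0 ≤ t ∧
        y = En a b c p q r (fun n => s * pos u n + t * neg u n)} := by
  refine ⟨0, 0, le_refl 0, le_refl 0, ?_⟩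
  have hfun : (fun n => (0:ℝ) * pos u n + (0:ℝ) * neg u n) = fun n => (0:ℝ) * u n := by
    funext n; ring
  rw [hfun, En_zero_smul H.hp2 H.hpq u]

include H in
lemma fiber2_sSup_nonneg (hu : memD a b c p q r u) (hvne : pos u ≠ 0) (hwne : neg u ≠ 0) :
    0 ≤ sSup {y : ℝ | ∃ s t : ℝ, 0 ≤ s ∧ 0 ≤ t ∧
        y = En a b c p q r (fun n => s * pos u n + t * neg u n)} := by
  obtain ⟨C, hC0, hC⟩ := fiber2_bddAbove H hu hvne hwne
  exact le_csSup ⟨C, fun y hy => hC y hy⟩ (fiber2_zero_mem H u)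

/-- A sign-changing finitely supported function. -/
def sgn2 : ℤ → ℝ := fun n => if n = 0 then 1 else if n = 1 then -1 else 0

lemma sgn2_vanish {n : ℤ} (h0 : n ≠ 0) (h1 : n ≠ 1) : sgn2 n = 0 := by
  rw [sgn2]
  simp [h0, h1]

include H in
lemma sgn2_memD : memD a b c p q r sgn2 := by
  have hq0 : 0 < q := hq0' H.hp2 H.hpq
  have hp2 := H.hp2
  constructor
  · apply summable_of_ne_finset_zero (s := {-1, 0, 1})
    intro n hn
    simp only [Finset.mem_insert, Finset.mem_singleton] at hn
    push_neg at hn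
    have h1 : sgn2 n = 0 := sgn2_vanish hn.2.1 hn.2.2
    have h2 : sgn2 (n + 1) = 0 :=
      sgn2_vanish (fun hcon => hn.1 (by omega)) (fun hcon => hn.2.1 (by omega))
    show a n * |dlt sgn2 n| ^ p + b n * |sgn2 n| ^ p = 0
    rw [show dlt sgn2 n = sgn2 (n+1) - sgn2 n from rfl, h1, h2]
    simp [zero_pow (by omega : p ≠ 0)]
  · apply summable_of_ne_finset_zero (s := {0, 1})
    intro n hn
    simp only [Finset.mem_insert, Finset.mem_singleton] at hn
    push_neg at hn
    have h1 : sgn2 n = 0 := sgn2_vanish hn.1 hn.2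
    show c n * |sgn2 n| ^ q * Real.log (|sgn2 n| ^ r) = 0
    rw [h1]
    simp [Real.zero_rpow hq0.ne']

lemma sgn2_pos_ne : pos sgn2 ≠ 0 := by
  intro h
  have := congrFun h 0
  have h0 : pos sgn2 0 = 1 := by
    show max (sgn2 0) 0 = 1
    rw [sgn2]
    norm_num
  rw [h0] at this
  exact one_ne_zero this

lemma sgn2_neg_ne : neg sgn2 ≠ 0 := by
  intro h
  have := congrFun h 1
  have h0 : neg sgn2 1 = -1 := by
    show min (sgn2 1) 0 = -1
    rw [sgn2]
    norm_num
  rw [h0] at this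
  norm_num at this

include H in
lemma Mset_nonempty : ∃ w, w ∈ Mset a b c p q r := by
  obtain ⟨s₀, t₀, hs₀, ht₀, hM⟩ :=
    exists_mem_Mset_scale H (sgn2_memD H) sgn2_pos_ne sgn2_neg_ne
  exact ⟨_, hM⟩

include H in
lemma part2_eq :
    mStar a b c p q r
      = sInf {x : ℝ | ∃ u : ℤ → ℝ, memD a b c p q r u ∧
          pos u ≠ 0 ∧ neg u ≠ 0 ∧
          x = sSup {y : ℝ | ∃ s t : ℝ, 0 ≤ s ∧ 0 ≤ t ∧
              y = En a b c p q r (fun n => s * pos u n + t * neg u n)}} := by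
  have himg_ne : (En a b c p q r '' Mset a b c p q r).Nonempty := by
    obtain ⟨w, hw⟩ := Mset_nonempty H
    exact ⟨_, ⟨w, hw, rfl⟩⟩
  have himg_bdd : BddBelow (En a b c p q r '' Mset a b c p q r) := by
    refine ⟨0, ?_⟩
    rintro y ⟨w, hw, rfl⟩
    exact En_nonneg_on_Mset H hw
  have hrhs_ne : {x : ℝ | ∃ u : ℤ → ℝ, memD a b c p q r u ∧
      pos u ≠ 0 ∧ neg u ≠ 0 ∧
      x = sSup {y : ℝ | ∃ s t : ℝ, 0 ≤ s ∧ 0 ≤ t ∧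
          y = En a b c p q r (fun n => s * pos u n + t * neg u n)}}.Nonempty :=
    ⟨_, sgn2, sgn2_memD H, sgn2_pos_ne, sgn2_neg_ne, rfl⟩
  have hrhs_bdd : BddBelow {x : ℝ | ∃ u : ℤ → ℝ, memD a b c p q r u ∧
      pos u ≠ 0 ∧ neg u ≠ 0 ∧
      x = sSup {y : ℝ | ∃ s t : ℝ, 0 ≤ s ∧ 0 ≤ t ∧
          y = En a b c p q r (fun n => s * pos u n + t * neg u n)}} := by
    refine ⟨0, ?_⟩
    rintro x ⟨u, hu, hvne, hwne, rfl⟩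
    exact fiber2_sSup_nonneg H hu hvne hwne
  apply le_antisymm
  · apply le_csInf hrhs_ne
    rintro x ⟨u, hu, hvne, hwne, rfl⟩
    obtain ⟨s₀, t₀, hs₀, ht₀, hM⟩ := exists_mem_Mset_scale H hu hvne hwne
    have h1 : mStar a b c p q r ≤ En a b c p q r (fun n => s₀ * pos u n + t₀ * neg u n) :=
      csInf_le himg_bdd ⟨_, hM, rfl⟩
    obtain ⟨C, hC0, hC⟩ := fiber2_bddAbove H hu hvne hwne
    have h2 : En a b c p q r (fun n => s₀ * pos u n + t₀ * neg u n)
        ≤ sSup {y : ℝ | ∃ s t : ℝ, 0 ≤ s ∧ 0 ≤ t ∧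
            y = En a b c p q r (fun n => s * pos u n + t * neg u n)} :=
      le_csSup ⟨C, fun y hy => hC y hy⟩ ⟨s₀, t₀, hs₀.le, ht₀.le, rfl⟩
    linarith
  · apply le_csInf himg_ne
    rintro y ⟨u, huM, rfl⟩
    have h1 : sInf {x : ℝ | ∃ u : ℤ → ℝ, memD a b c p q r u ∧
        pos u ≠ 0 ∧ neg u ≠ 0 ∧
        x = sSup {y : ℝ | ∃ s t : ℝ, 0 ≤ s ∧ 0 ≤ t ∧
            y = En a b c p q r (fun n => s * pos u n + t * neg u n)}}
        ≤ sSup {y : ℝ | ∃ s t : ℝ, 0 ≤ s ∧ 0 ≤ t ∧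
            y = En a b c p q r (fun n => s * pos u n + t * neg u n)} :=
      csInf_le hrhs_bdd ⟨u, huM.1, huM.2.1, huM.2.2.1, rfl⟩
    have h2 : sSup {y : ℝ | ∃ s t : ℝ, 0 ≤ s ∧ 0 ≤ t ∧
        y = En a b c p q r (fun n => s * pos u n + t * neg u n)}
        ≤ En a b c p q r u :=
      Real.sSup_le (fiber2_le_En_on_Mset H huM) (En_nonneg_on_Mset H huM)
    exact le_trans h1 h2

end part2
theorem stmt12 (p : ℕ) (hp2 : 2 ≤ p) (hpe : Even p)
    (q r : ℝ) (hpq : (p : ℝ) < q) (hr : 1 ≤ r)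
    (a b c : ℤ → ℝ)
    (ha : ∀ n, 0 < a n) (hb : ∀ n, 0 < b n) (hc : ∀ n, 0 < c n)
    (b0 : ℝ) (hb0 : 0 < b0) (hbb : ∀ n, b0 ≤ b n)
    (hbinf : Tendsto b cofinite atTop)
    (c0 : ℝ) (hc0 : 0 < c0) (hcc : ∀ n, c n ≤ c0)
    (hcsum : Summable c) :
    cStar a b c p q r
        = sInf {x : ℝ | ∃ u : ℤ → ℝ, memD a b c p q r u ∧ u ≠ 0 ∧
            x = sSup {y : ℝ | ∃ t : ℝ, 0 ≤ t ∧
                y = En a b c p q r (fun n => t * u n)}} ∧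
      mStar a b c p q r
        = sInf {x : ℝ | ∃ u : ℤ → ℝ, memD a b c p q r u ∧
            pos u ≠ 0 ∧ neg u ≠ 0 ∧
            x = sSup {y : ℝ | ∃ s t : ℝ, 0 ≤ s ∧ 0 ≤ t ∧
                y = En a b c p q r (fun n => s * pos u n + t * neg u n)}} := by
  have H : Hyps p q r a b c b0 c0 := ⟨hp2, hpe, hpq, hr, ha, hb, hc, hb0, hbb, hc0, hcc, hcsum⟩
  exact ⟨part1_eq H, part2_eq H⟩

end DPLap
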